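/- arXiv:1707.06864 — 3 statements merged into one kernel-verified Lean document; each statement's English description precedes it below -/
import Mathlib

section
/- For 1 ≤ k ≤ e-1, an element w ∈ G(e,e,n) divides λ^k (i.e., w ≼ λ^k) if and only if every nonzero entry of w lying weakly below-right of the 'bullet path' (i.e., every nonzero entry w[i,c] that is not a bullet) is equal to 1 or ζ_e^k; here a bullet is a nonzero entry w[i,c] such that all entries w[i',c'] with i' ≤ i, c' ≤ c and (i',c') ≠ (i,c) are zero. -/
open Matrix Complex
open scoped Classical

/-- `ζ_e = exp(2πi/e)`. -/
noncomputable def zeta (e : ℕ) : ℂ := Complex.exp (2 * Real.pi * Complex.I / e)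

/-- The generator `t_i` of `G(e,e,n)`: the monomial matrix with upper-left `2×2` block
`[[0, ζ_e^{-i}],[ζ_e^i, 0]]` and identity elsewhere. -/
noncomputable def tmat (e n : ℕ) (i : ℤ) : Matrix (Fin n) (Fin n) ℂ :=
  Matrix.of fun a b =>
    if (a : ℕ) = 0 ∧ (b : ℕ) = 1 then zeta e ^ (-i)
    else if (a : ℕ) = 1 ∧ (b : ℕ) = 0 then zeta e ^ i
    else if a = b ∧ 2 ≤ (a : ℕ) then 1 else 0

/-- The generator `s_j` of `G(e,e,n)`: the permutation matrix of the transposition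
exchanging coordinates `j-1` and `j` (1-indexed), i.e. indices `j-2` and `j-1` (0-indexed). -/
def smat (n : ℕ) (j : ℕ) : Matrix (Fin n) (Fin n) ℂ :=
  Matrix.of fun a b =>
    if (a : ℕ) = j - 2 ∧ (b : ℕ) = j - 1 then 1
    else if (a : ℕ) = j - 1 ∧ (b : ℕ) = j - 2 then 1
    else if a = b ∧ (a : ℕ) ≠ j - 2 ∧ (a : ℕ) ≠ j - 1 then 1 else 0

/-- The generating set `X = {t_0, …, t_{e-1}, s_3, …, s_n}` of `G(e,e,n)`. -/
noncomputable def Xset (e n : ℕ) : Set (Matrix (Fin n) (Fin n) ℂ) :=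
  {w | (∃ i : ℕ, i < e ∧ w = tmat e n i) ∨ (∃ j : ℕ, 3 ≤ j ∧ j ≤ n ∧ w = smat n j)}

/-- Membership in `G(e,e,n)`: `w` is monomial, its nonzero entries are `e`-th roots of
unity, and the product of its nonzero entries is `1`. -/
def IsGeen (e n : ℕ) (w : Matrix (Fin n) (Fin n) ℂ) : Prop :=
  (∀ i, ∃! j, w i j ≠ 0) ∧ (∀ j, ∃! i, w i j ≠ 0) ∧
  (∀ i j, w i j ≠ 0 → w i j ^ e = 1) ∧
  (∏ i, ∏ j, (if w i j ≠ 0 then w i j else 1)) = 1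

/-- The length `ℓ(w)` of `w` over the generating set `X` (all generators are
involutions, so positive words suffice). -/
noncomputable def len (e n : ℕ) (w : Matrix (Fin n) (Fin n) ℂ) : ℕ :=
  sInf {r | ∃ l : List (Matrix (Fin n) (Fin n) ℂ),
    (∀ x ∈ l, x ∈ Xset e n) ∧ l.length = r ∧ l.prod = w}

/-- Left divisibility: `w' ≼ w` iff `w = w' w''` with `w'' ∈ G(e,e,n)` and
`ℓ(w) = ℓ(w') + ℓ(w'')`. -/
noncomputable def ldvd (e n : ℕ) (w' w : Matrix (Fin n) (Fin n) ℂ) : Prop :=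
  ∃ w'', IsGeen e n w'' ∧ w = w' * w'' ∧ len e n w = len e n w' + len e n w''

/-- Right divisibility: `w' ≼_r w` iff `w = w'' w'` with `w'' ∈ G(e,e,n)` and
`ℓ(w) = ℓ(w'') + ℓ(w')`. -/
noncomputable def rdvd (e n : ℕ) (w' w : Matrix (Fin n) (Fin n) ℂ) : Prop :=
  ∃ w'', IsGeen e n w'' ∧ w = w'' * w' ∧ len e n w = len e n w'' + len e n w'

/-- The element `λ = diag(ζ_e^{-(n-1)}, ζ_e, …, ζ_e)`. -/
noncomputable def lam (e n : ℕ) : Matrix (Fin n) (Fin n) ℂ :=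
  Matrix.diagonal (fun i => if (i : ℕ) = 0 then zeta e ^ (-(n - 1 : ℤ)) else zeta e)

/-- A nonzero entry `w[i,c]` is a bullet if every entry weakly above and to its left
(other than itself) is zero. -/
def IsBullet (n : ℕ) (w : Matrix (Fin n) (Fin n) ℂ) (i c : Fin n) : Prop :=
  w i c ≠ 0 ∧ ∀ i' c' : Fin n, i' ≤ i → c' ≤ c → (i', c') ≠ (i, c) → w i' c' = 0


namespace S12
open Finset Equiv

variable {n : ℕ}

/-- Monomial matrix with permutation `σ` (row `i` has its nonzero entry in column `σ i`)
and values `z`. -/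
def Mm (σ : Equiv.Perm (Fin n)) (z : Fin n → ℂ) : Matrix (Fin n) (Fin n) ℂ :=
  Matrix.of fun i c => if c = σ i then z i else 0

/-- Number of nonzero entries strictly above-left of the entry in row `i`. -/
def ND (σ : Equiv.Perm (Fin n)) (i : Fin n) : ℕ :=
  (Finset.univ.filter fun j => j < i ∧ σ j < σ i).card

/-- Number of inversions with the entry in row `i` (above-right entries). -/
def IV (σ : Equiv.Perm (Fin n)) (i : Fin n) : ℕ :=
  (Finset.univ.filter fun j => j < i ∧ σ i < σ j).card

noncomputable def badD (σ : Equiv.Perm (Fin n)) (z : Fin n → ℂ) : ℕ :=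
  ∑ i, if z i = 1 then 0 else ND σ i

noncomputable def phiD (σ : Equiv.Perm (Fin n)) (z : Fin n → ℂ) : ℕ :=
  (∑ i, IV σ i) + 2 * badD σ z

def Pcnt (σ : Equiv.Perm (Fin n)) (a r : Fin n) : ℕ :=
  (Finset.univ.filter fun j => j < r ∧ σ j < a).card

section order
variable {a b : Fin n}

lemma lt_b_iff (hab : a < b) (hadj : ∀ c, a < c → b ≤ c) (x : Fin n) : x < b ↔ x ≤ a := by
  constructor
  · intro h
    by_contra hx
    exact absurd (hadj x (lt_of_not_ge hx)) (not_le.2 h)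
  · intro h
    exact lt_of_le_of_lt h hab

lemma swap_cmp (hab : a < b) (hadj : ∀ c, a < c → b ≤ c) (x y : Fin n) (hy : y ≠ a) (hy' : y ≠ b) :
    (Equiv.swap a b x < y ↔ x < y) ∧ (y < Equiv.swap a b x ↔ y < x) := by
  rcases eq_or_ne x a with rfl | hxa
  · rw [Equiv.swap_apply_left]
    constructor
    · constructor
      · intro h; exact lt_trans hab h
      · intro h
        exact lt_of_le_of_ne (hadj y h) (Ne.symm hy')
    · rw [lt_b_iff hab hadj]
      exact ⟨fun h => lt_of_le_of_ne h hy, fun h => le_of_lt h⟩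
  rcases eq_or_ne x b with rfl | hxb
  · rw [Equiv.swap_apply_right]
    constructor
    · constructor
      · intro h
        exact lt_of_le_of_ne (hadj y h) (Ne.symm hy')
      · intro h; exact lt_trans hab h
    · rw [lt_b_iff hab hadj] at *
      exact ⟨fun h => le_of_lt h, fun h => lt_of_le_of_ne h hy⟩
  · rw [Equiv.swap_apply_of_ne_of_ne hxa hxb]
    exact ⟨Iff.rfl, Iff.rfl⟩

lemma swap_lt_a (hab : a < b) (x : Fin n) : Equiv.swap a b x < a ↔ x < a := by
  rcases eq_or_ne x a with rfl | hxa
  · rw [Equiv.swap_apply_left]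
    simp [not_lt.2 hab.le, lt_irrefl]
  rcases eq_or_ne x b with rfl | hxb
  · rw [Equiv.swap_apply_right]
    simp [lt_irrefl, not_lt.2 hab.le]
  · rw [Equiv.swap_apply_of_ne_of_ne hxa hxb]

lemma swap_lt_b (hab : a < b) (hadj : ∀ c, a < c → b ≤ c) (x : Fin n) : Equiv.swap a b x < b ↔ (x < a ∨ x = b) := by
  rcases eq_or_ne x a with rfl | hxa
  · rw [Equiv.swap_apply_left]
    simp [lt_irrefl, hab.ne]
  rcases eq_or_ne x b with rfl | hxb
  · rw [Equiv.swap_apply_right]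
    simp [hab]
  · rw [Equiv.swap_apply_of_ne_of_ne hxa hxb, lt_b_iff hab hadj]
    constructor
    · intro h; exact Or.inl (lt_of_le_of_ne h hxa)
    · rintro (h | rfl)
      · exact le_of_lt h
      · exact absurd rfl hxb
end order

section step
variable (σ : Equiv.Perm (Fin n)) (z : Fin n → ℂ) {a b : Fin n}

lemma sigma_ne_a {i : Fin n} (h : i ≠ σ.symm a) : σ i ≠ a := by
  intro hc; exact h (by rw [← hc, Equiv.symm_apply_apply])

lemma ND_off (hab : a < b) (hadj : ∀ c, a < c → b ≤ c) {i : Fin n} (h1 : σ i ≠ a) (h2 : σ i ≠ b) :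
    ND (σ.trans (Equiv.swap a b)) i = ND σ i := by
  unfold ND
  congr 1
  apply Finset.filter_congr
  intro j _
  simp only [Equiv.trans_apply]
  rw [Equiv.swap_apply_of_ne_of_ne h1 h2]
  exact and_congr_right fun _ => (swap_cmp hab hadj (σ j) (σ i) h1 h2).1

lemma IV_off (hab : a < b) (hadj : ∀ c, a < c → b ≤ c) {i : Fin n} (h1 : σ i ≠ a) (h2 : σ i ≠ b) :
    IV (σ.trans (Equiv.swap a b)) i = IV σ i := by
  unfold IV
  congr 1
  apply Finset.filter_congr
  intro j _
  simp only [Equiv.trans_apply]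
  rw [Equiv.swap_apply_of_ne_of_ne h1 h2]
  exact and_congr_right fun _ => (swap_cmp hab hadj (σ j) (σ i) h1 h2).2

lemma ND_ra' (hab : a < b) (hadj : ∀ c, a < c → b ≤ c) : ND (σ.trans (Equiv.swap a b)) (σ.symm a)
    = Pcnt σ a (σ.symm a) + (if σ.symm b < σ.symm a then 1 else 0) := by
  unfold ND Pcnt
  have hsa : σ (σ.symm a) = a := σ.apply_symm_apply a
  have key : ∀ j : Fin n, ((σ.trans (Equiv.swap a b)) j < (σ.trans (Equiv.swap a b)) (σ.symm a))
      ↔ (σ j < a ∨ j = σ.symm b) := by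
    intro j
    simp only [Equiv.trans_apply, hsa, Equiv.swap_apply_left]
    rw [swap_lt_b hab hadj]
    constructor
    · rintro (h | h)
      · exact Or.inl h
      · exact Or.inr (by rw [← h, Equiv.symm_apply_apply])
    · rintro (h | rfl)
      · exact Or.inl h
      · exact Or.inr (σ.apply_symm_apply b)
  by_cases hr : σ.symm b < σ.symm a
  · rw [if_pos hr]
    have : (Finset.univ.filter fun j => j < σ.symm a ∧
        (σ.trans (Equiv.swap a b)) j < (σ.trans (Equiv.swap a b)) (σ.symm a))
        = insert (σ.symm b) (Finset.univ.filter fun j => j < σ.symm a ∧ σ j < a) := by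
      ext j
      simp only [Finset.mem_filter, Finset.mem_univ, true_and, Finset.mem_insert, key j]
      constructor
      · rintro ⟨hj, (h | rfl)⟩
        · exact Or.inr ⟨hj, h⟩
        · exact Or.inl rfl
      · rintro (rfl | ⟨hj, h⟩)
        · exact ⟨hr, Or.inr rfl⟩
        · exact ⟨hj, Or.inl h⟩
    rw [this, Finset.card_insert_of_notMem]
    simp only [Finset.mem_filter, Finset.mem_univ, true_and, not_and]
    intro _
    rw [σ.apply_symm_apply b]
    exact not_lt.2 hab.le
  · rw [if_neg hr, add_zero]
    congr 1
    apply Finset.filter_congr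
    intro j _
    rw [key j]
    constructor
    · rintro ⟨hj, (h | rfl)⟩
      · exact ⟨hj, h⟩
      · exact absurd hj hr
    · rintro ⟨hj, h⟩
      exact ⟨hj, Or.inl h⟩

lemma ND_rb' (hab : a < b) : ND (σ.trans (Equiv.swap a b)) (σ.symm b) = Pcnt σ a (σ.symm b) := by
  unfold ND Pcnt
  congr 1
  apply Finset.filter_congr
  intro j _
  simp only [Equiv.trans_apply, σ.apply_symm_apply b, Equiv.swap_apply_right]
  exact and_congr_right fun _ => swap_lt_a hab (σ j)

lemma ND_ra_old : ND σ (σ.symm a) = Pcnt σ a (σ.symm a) := by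
  unfold ND Pcnt
  congr 1
  apply Finset.filter_congr
  intro j _
  rw [σ.apply_symm_apply a]

lemma ND_rb_old (hab : a < b) (hadj : ∀ c, a < c → b ≤ c) : ND σ (σ.symm b)
    = Pcnt σ a (σ.symm b) + (if σ.symm a < σ.symm b then 1 else 0) := by
  unfold ND Pcnt
  have key : ∀ j : Fin n, (σ j < σ (σ.symm b)) ↔ (σ j < a ∨ j = σ.symm a) := by
    intro j
    rw [σ.apply_symm_apply b, lt_b_iff hab hadj, le_iff_lt_or_eq]
    apply or_congr Iff.rfl
    rw [Equiv.apply_eq_iff_eq_symm_apply]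
  by_cases hr : σ.symm a < σ.symm b
  · rw [if_pos hr]
    have : (Finset.univ.filter fun j => j < σ.symm b ∧ σ j < σ (σ.symm b))
        = insert (σ.symm a) (Finset.univ.filter fun j => j < σ.symm b ∧ σ j < a) := by
      ext j
      simp only [Finset.mem_filter, Finset.mem_univ, true_and, Finset.mem_insert, key j]
      constructor
      · rintro ⟨hj, (h | rfl)⟩
        · exact Or.inr ⟨hj, h⟩
        · exact Or.inl rfl
      · rintro (rfl | ⟨hj, h⟩)
        · exact ⟨hr, Or.inr rfl⟩
        · exact ⟨hj, Or.inl h⟩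
    rw [this, Finset.card_insert_of_notMem]
    simp only [Finset.mem_filter, Finset.mem_univ, true_and, not_and]
    intro _
    rw [σ.apply_symm_apply a]
    exact lt_irrefl a
  · rw [if_neg hr, add_zero]
    congr 1
    apply Finset.filter_congr
    intro j _
    rw [key j]
    constructor
    · rintro ⟨hj, (h | rfl)⟩
      · exact ⟨hj, h⟩
      · exact absurd hj hr
    · rintro ⟨hj, h⟩
      exact ⟨hj, Or.inl h⟩

lemma ND_add_IV (i : Fin n) : ND σ i + IV σ i = ND 1 i := by
  unfold ND IV
  have h1 : (Finset.univ.filter fun j : Fin n => j < i ∧ (1 : Equiv.Perm (Fin n)) j < (1 : Equiv.Perm (Fin n)) i)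
      = Finset.univ.filter fun j : Fin n => j < i := by
    apply Finset.filter_congr
    intro j _
    simp [Equiv.Perm.one_apply]
  rw [h1]
  have h2 : (Finset.univ.filter fun j : Fin n => j < i ∧ σ j < σ i)
      = (Finset.univ.filter fun j : Fin n => j < i).filter fun j => σ j < σ i := by
    rw [Finset.filter_filter]
  have h3 : (Finset.univ.filter fun j : Fin n => j < i ∧ σ i < σ j)
      = (Finset.univ.filter fun j : Fin n => j < i).filter fun j => ¬ (σ j < σ i) := by
    rw [Finset.filter_filter]
    apply Finset.filter_congr
    intro j _
    apply and_congr_right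
    intro hj
    constructor
    · exact fun h => not_lt.2 (le_of_lt h)
    · intro h
      rcases lt_or_eq_of_le (not_lt.1 h) with h' | h'
      · exact h'
      · exact absurd (σ.injective h'.symm) (ne_of_lt hj)
  rw [h2, h3]
  exact Finset.card_filter_add_card_filter_not _

lemma sum_split (f : Fin n → ℕ) {ra rb : Fin n} (h : ra ≠ rb) :
    ∑ i, f i = f ra + f rb + ∑ i ∈ (Finset.univ.erase ra).erase rb, f i := by
  rw [← Finset.add_sum_erase Finset.univ f (Finset.mem_univ ra),
    ← Finset.add_sum_erase (Finset.univ.erase ra) f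
      (Finset.mem_erase.2 ⟨Ne.symm h, Finset.mem_univ rb⟩), add_assoc]


lemma step_main (hab : a < b) (hadj : ∀ c, a < c → b ≤ c)
    (u : Fin n → ℂ) (hu : ∀ c, c ≠ a → c ≠ b → u c = 1) :
    phiD (σ.trans (Equiv.swap a b)) (fun i => z i * u (σ i))
      + ((if σ.symm b < σ.symm a then 1 else 0)
        + 2 * ((if z (σ.symm a) = 1 then 0 else Pcnt σ a (σ.symm a))
             + (if z (σ.symm b) = 1 then 0 else
                  Pcnt σ a (σ.symm b) + (if σ.symm a < σ.symm b then 1 else 0))))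
    = phiD σ z
      + ((if σ.symm a < σ.symm b then 1 else 0)
        + 2 * ((if z (σ.symm a) * u a = 1 then 0 else
                  Pcnt σ a (σ.symm a) + (if σ.symm b < σ.symm a then 1 else 0))
             + (if z (σ.symm b) * u b = 1 then 0 else Pcnt σ a (σ.symm b)))) := by
  have hrab : σ.symm a ≠ σ.symm b := fun h => hab.ne (by
    have := congrArg σ h
    rwa [σ.apply_symm_apply, σ.apply_symm_apply] at this)
  have hoff : ∀ i ∈ (Finset.univ.erase (σ.symm a)).erase (σ.symm b),
      σ i ≠ a ∧ σ i ≠ b := by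
    intro i hi
    rcases Finset.mem_erase.1 hi with ⟨hib, hi'⟩
    rcases Finset.mem_erase.1 hi' with ⟨hia, -⟩
    exact ⟨sigma_ne_a σ hia, sigma_ne_a σ hib⟩
  -- inversion part
  have E1 : (∑ i, IV (σ.trans (Equiv.swap a b)) i) + (if σ.symm b < σ.symm a then 1 else 0)
      = (∑ i, IV σ i) + (if σ.symm a < σ.symm b then 1 else 0) := by
    have h1 : (∑ i, IV (σ.trans (Equiv.swap a b)) i)
        = IV (σ.trans (Equiv.swap a b)) (σ.symm a) + IV (σ.trans (Equiv.swap a b)) (σ.symm b)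
          + ∑ i ∈ (Finset.univ.erase (σ.symm a)).erase (σ.symm b),
              IV (σ.trans (Equiv.swap a b)) i := sum_split _ hrab
    have h2 : (∑ i, IV σ i)
        = IV σ (σ.symm a) + IV σ (σ.symm b)
          + ∑ i ∈ (Finset.univ.erase (σ.symm a)).erase (σ.symm b), IV σ i := sum_split _ hrab
    have hrest : ∑ i ∈ (Finset.univ.erase (σ.symm a)).erase (σ.symm b),
        IV (σ.trans (Equiv.swap a b)) i
        = ∑ i ∈ (Finset.univ.erase (σ.symm a)).erase (σ.symm b), IV σ i := by
      apply Finset.sum_congr rfl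
      intro i hi
      exact IV_off σ hab hadj (hoff i hi).1 (hoff i hi).2
    have k1 := ND_add_IV (σ.trans (Equiv.swap a b)) (σ.symm a)
    have k2 := ND_add_IV (σ.trans (Equiv.swap a b)) (σ.symm b)
    have k3 := ND_add_IV σ (σ.symm a)
    have k4 := ND_add_IV σ (σ.symm b)
    rw [ND_ra' σ hab hadj] at k1
    rw [ND_rb' σ hab] at k2
    rw [ND_ra_old σ] at k3
    rw [ND_rb_old σ hab hadj] at k4
    omega
  -- bad part
  have B1 : badD (σ.trans (Equiv.swap a b)) (fun i => z i * u (σ i))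
      = (if z (σ.symm a) * u a = 1 then 0 else
            Pcnt σ a (σ.symm a) + (if σ.symm b < σ.symm a then 1 else 0))
        + (if z (σ.symm b) * u b = 1 then 0 else Pcnt σ a (σ.symm b))
        + ∑ i ∈ (Finset.univ.erase (σ.symm a)).erase (σ.symm b),
            (if z i = 1 then 0 else ND σ i) := by
    have h1 : badD (σ.trans (Equiv.swap a b)) (fun i => z i * u (σ i))
        = (if z (σ.symm a) * u (σ (σ.symm a)) = 1 then 0
              else ND (σ.trans (Equiv.swap a b)) (σ.symm a))
          + (if z (σ.symm b) * u (σ (σ.symm b)) = 1 then 0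
              else ND (σ.trans (Equiv.swap a b)) (σ.symm b))
          + ∑ i ∈ (Finset.univ.erase (σ.symm a)).erase (σ.symm b),
              (if z i * u (σ i) = 1 then 0 else ND (σ.trans (Equiv.swap a b)) i) :=
      sum_split _ hrab
    rw [h1, σ.apply_symm_apply, σ.apply_symm_apply, ND_ra' σ hab hadj, ND_rb' σ hab]
    congr 1
    apply Finset.sum_congr rfl
    intro i hi
    rw [hu (σ i) (hoff i hi).1 (hoff i hi).2, mul_one,
      ND_off σ hab hadj (hoff i hi).1 (hoff i hi).2]
  have B2 : badD σ z
      = (if z (σ.symm a) = 1 then 0 else Pcnt σ a (σ.symm a))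
        + (if z (σ.symm b) = 1 then 0 else
            Pcnt σ a (σ.symm b) + (if σ.symm a < σ.symm b then 1 else 0))
        + ∑ i ∈ (Finset.univ.erase (σ.symm a)).erase (σ.symm b),
            (if z i = 1 then 0 else ND σ i) := by
    have h1 : badD σ z
        = (if z (σ.symm a) = 1 then 0 else ND σ (σ.symm a))
          + (if z (σ.symm b) = 1 then 0 else ND σ (σ.symm b))
          + ∑ i ∈ (Finset.univ.erase (σ.symm a)).erase (σ.symm b),
              (if z i = 1 then 0 else ND σ i) := sum_split _ hrab
    rw [h1, ND_ra_old σ, ND_rb_old σ hab hadj]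
  unfold phiD
  omega

end step


section gens
variable {e : ℕ}

lemma zeta_ne_zero (e : ℕ) : zeta e ≠ 0 := Complex.exp_ne_zero _

lemma zeta_prim (e : ℕ) (he : e ≠ 0) : IsPrimitiveRoot (zeta e) e :=
  Complex.isPrimitiveRoot_exp e he

lemma zeta_pow_e (e : ℕ) (he : e ≠ 0) : zeta e ^ e = 1 := (zeta_prim e he).pow_eq_one

lemma zeta_zpow_pow (e : ℕ) (he : e ≠ 0) (m : ℤ) : (zeta e ^ m) ^ e = 1 := by
  rw [← zpow_natCast (zeta e ^ m) e, ← _root_.zpow_mul, mul_comm, _root_.zpow_mul,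
    zpow_natCast, zeta_pow_e e he, _root_.one_zpow]

/-- value function of a generator supported on `{a, b}`. -/
noncomputable def gf (a b : Fin n) (x : ℂ) : Fin n → ℂ := fun c => if c = a then x else if c = b then x⁻¹ else 1

lemma gf_off {a b c : Fin n} (x : ℂ) (h1 : c ≠ a) (h2 : c ≠ b) : gf a b x c = 1 := by
  simp [gf, h1, h2]

lemma gf_ne_zero {a b : Fin n} {x : ℂ} (hx : x ≠ 0) : ∀ c, gf a b x c ≠ 0 := by
  intro c
  unfold gf
  split_ifs
  · exact hx
  · exact inv_ne_zero hx
  · exact one_ne_zero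

lemma gf_pow {a b : Fin n} {x : ℂ} (hx : x ^ e = 1) : ∀ c, gf a b x c ^ e = 1 := by
  intro c
  unfold gf
  split_ifs
  · exact hx
  · rw [inv_pow, hx, inv_one]
  · exact one_pow e

lemma gf_prod {a b : Fin n} {x : ℂ} (hne : a ≠ b) (hx : x ≠ 0) : ∏ c, gf a b x c = 1 := by
  rw [← Finset.mul_prod_erase Finset.univ _ (Finset.mem_univ a),
    ← Finset.mul_prod_erase (Finset.univ.erase a) _
      (Finset.mem_erase.2 ⟨Ne.symm hne, Finset.mem_univ b⟩)]
  have h1 : gf a b x a = x := by simp [gf]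
  have h2 : gf a b x b = x⁻¹ := by simp [gf, Ne.symm hne]
  have h3 : ∏ c ∈ (Finset.univ.erase a).erase b, gf a b x c = 1 := by
    apply Finset.prod_eq_one
    intro c hc
    rcases Finset.mem_erase.1 hc with ⟨hcb, hc'⟩
    rcases Finset.mem_erase.1 hc' with ⟨hca, -⟩
    exact gf_off x hca hcb
  rw [h1, h2, h3, mul_one, mul_inv_cancel₀ hx]

lemma gf_invol {a b : Fin n} {x : ℂ} (hne : a ≠ b) (hx : x ≠ 0) :
    ∀ c, gf a b x c * gf a b x (Equiv.swap a b c) = 1 := by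
  intro c
  rcases eq_or_ne c a with rfl | hca
  · rw [Equiv.swap_apply_left]
    have e1 : gf c b x c = x := if_pos rfl
    have e2 : gf c b x b = x⁻¹ := by
      show (if b = c then x else if b = b then x⁻¹ else 1) = x⁻¹
      rw [if_neg (Ne.symm hne), if_pos rfl]
    rw [e1, e2, mul_inv_cancel₀ hx]
  · rcases eq_or_ne c b with rfl | hcb
    · rw [Equiv.swap_apply_right]
      have e1 : gf a c x c = x⁻¹ := by
        show (if c = a then x else if c = c then x⁻¹ else 1) = x⁻¹
        rw [if_neg hca, if_pos rfl]
      have e2 : gf a c x a = x := if_pos rfl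
      rw [e1, e2, inv_mul_cancel₀ hx]
    · rw [Equiv.swap_apply_of_ne_of_ne hca hcb, gf_off x hca hcb, mul_one]

lemma Mm_mul (σ τ : Equiv.Perm (Fin n)) (z u : Fin n → ℂ) :
    Mm σ z * Mm τ u = Mm (σ.trans τ) (fun i => z i * u (σ i)) := by
  ext i c
  unfold Mm
  simp only [Matrix.mul_apply, Matrix.of_apply]
  rw [Finset.sum_eq_single (σ i)]
  · rw [if_pos rfl]
    simp only [Equiv.trans_apply]
    by_cases h : c = τ (σ i)
    · simp [h]
    · simp [h]
  · intro j _ hj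
    rw [if_neg hj, zero_mul]
  · intro h
    exact absurd (Finset.mem_univ _) h

lemma Mm_one : Mm (1 : Equiv.Perm (Fin n)) (fun _ => (1 : ℂ)) = 1 := by
  ext i c
  simp [Mm, Matrix.one_apply, eq_comm]

lemma Mm_inj {σ τ : Equiv.Perm (Fin n)} {z y : Fin n → ℂ} (hz : ∀ i, z i ≠ 0)
    (h : Mm σ z = Mm τ y) : σ = τ ∧ z = y := by
  have key : ∀ i, σ i = τ i ∧ z i = y i := by
    intro i
    have h1 := congrFun (congrFun h i) (σ i)
    simp only [Mm, Matrix.of_apply, if_pos rfl] at h1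
    by_cases hc : σ i = τ i
    · rw [if_pos hc] at h1
      exact ⟨hc, h1⟩
    · rw [if_neg hc] at h1
      exact absurd h1 (hz i)
  exact ⟨Equiv.ext fun i => (key i).1, funext fun i => (key i).2⟩

lemma tmat_eq (e : ℕ) (hn : 2 ≤ n) (i : ℤ) :
    tmat e n i = Mm (Equiv.swap (⟨0, by omega⟩ : Fin n) ⟨1, by omega⟩)
      (gf ⟨0, by omega⟩ ⟨1, by omega⟩ (zeta e ^ (-i))) := by
  set a : Fin n := ⟨0, by omega⟩ with ha
  set b : Fin n := ⟨1, by omega⟩ with hb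
  have hav : (a : ℕ) = 0 := rfl
  have hbv : (b : ℕ) = 1 := rfl
  have hab : a ≠ b := by
    intro h
    rw [Fin.ext_iff] at h
    omega
  have hinv : (zeta e ^ (-i))⁻¹ = zeta e ^ i := by rw [← _root_.zpow_neg, neg_neg]
  ext r c
  show (if (r : ℕ) = 0 ∧ (c : ℕ) = 1 then zeta e ^ (-i)
    else if (r : ℕ) = 1 ∧ (c : ℕ) = 0 then zeta e ^ i
    else if r = c ∧ 2 ≤ (r : ℕ) then 1 else 0)
    = if c = (Equiv.swap a b) r then gf a b (zeta e ^ (-i)) r else 0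
  rcases eq_or_ne r a with rfl | hra
  · rw [Equiv.swap_apply_left]
    have g1 : gf a b (zeta e ^ (-i)) a = zeta e ^ (-i) := if_pos rfl
    rcases eq_or_ne c b with rfl | hcb
    · rw [if_pos ⟨hav, hbv⟩, if_pos rfl, g1]
    · have hc1 : ¬((c : ℕ) = 1) := fun h => hcb (Fin.ext (by omega))
      rw [if_neg (by rintro ⟨h1, h2⟩; omega), if_neg (by rintro ⟨h1, h2⟩; omega),
        if_neg (by rintro ⟨rfl, h2⟩; omega), if_neg hcb]
  · rcases eq_or_ne r b with rfl | hrb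
    · rw [Equiv.swap_apply_right]
      have g2 : gf a b (zeta e ^ (-i)) b = (zeta e ^ (-i))⁻¹ := by
        show (if b = a then _ else if b = b then _ else 1) = _
        rw [if_neg (Ne.symm hab), if_pos rfl]
      rcases eq_or_ne c a with rfl | hca
      · rw [if_neg (by rintro ⟨h1, h2⟩; omega), if_pos ⟨hbv, hav⟩, if_pos rfl, g2, hinv]
      · have hc0 : ¬((c : ℕ) = 0) := fun h => hca (Fin.ext (by omega))
        rw [if_neg (by rintro ⟨h1, h2⟩; omega), if_neg (by rintro ⟨h1, h2⟩; omega),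
          if_neg (by rintro ⟨rfl, h2⟩; omega), if_neg hca]
    · have hr0 : ¬((r : ℕ) = 0) := fun h => hra (Fin.ext (by omega))
      have hr1 : ¬((r : ℕ) = 1) := fun h => hrb (Fin.ext (by omega))
      rw [Equiv.swap_apply_of_ne_of_ne hra hrb, gf_off _ hra hrb]
      rcases eq_or_ne c r with rfl | hcr
      · rw [if_neg (by rintro ⟨h1, h2⟩; omega), if_neg (by rintro ⟨h1, h2⟩; omega),
          if_pos ⟨rfl, by omega⟩, if_pos rfl]
      · rw [if_neg (by rintro ⟨h1, h2⟩; omega), if_neg (by rintro ⟨h1, h2⟩; omega),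
          if_neg (by rintro ⟨h1, h2⟩; exact hcr h1.symm), if_neg hcr]

lemma smat_eq (hn : 2 ≤ n) (j : ℕ) (h3 : 3 ≤ j) (hjn : j ≤ n) :
    smat n j = Mm (Equiv.swap (⟨j - 2, by omega⟩ : Fin n) ⟨j - 1, by omega⟩)
      (gf ⟨j - 2, by omega⟩ ⟨j - 1, by omega⟩ 1) := by
  set a : Fin n := ⟨j - 2, by omega⟩ with ha
  set b : Fin n := ⟨j - 1, by omega⟩ with hb
  have hav : (a : ℕ) = j - 2 := rfl
  have hbv : (b : ℕ) = j - 1 := rfl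
  have hab : a ≠ b := by
    intro h
    rw [Fin.ext_iff] at h
    omega
  have hgf : ∀ c, gf a b (1 : ℂ) c = 1 := by
    intro c
    simp only [gf]
    split_ifs <;> simp
  ext r c
  show (if (r : ℕ) = j - 2 ∧ (c : ℕ) = j - 1 then 1
    else if (r : ℕ) = j - 1 ∧ (c : ℕ) = j - 2 then 1
    else if r = c ∧ (r : ℕ) ≠ j - 2 ∧ (r : ℕ) ≠ j - 1 then 1 else 0)
    = if c = (Equiv.swap a b) r then gf a b (1 : ℂ) r else 0
  rw [hgf]
  rcases eq_or_ne r a with rfl | hra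
  · rw [Equiv.swap_apply_left]
    rcases eq_or_ne c b with rfl | hcb
    · rw [if_pos ⟨hav, hbv⟩, if_pos rfl]
    · have hc1 : ¬((c : ℕ) = j - 1) := fun h => hcb (Fin.ext (by omega))
      rw [if_neg (by rintro ⟨h1, h2⟩; omega), if_neg (by rintro ⟨h1, h2⟩; omega),
        if_neg (by rintro ⟨rfl, h2, h3'⟩; omega), if_neg hcb]
  · rcases eq_or_ne r b with rfl | hrb
    · rw [Equiv.swap_apply_right]
      rcases eq_or_ne c a with rfl | hca
      · rw [if_neg (by rintro ⟨h1, h2⟩; omega), if_pos ⟨hbv, hav⟩, if_pos rfl]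
      · have hc0 : ¬((c : ℕ) = j - 2) := fun h => hca (Fin.ext (by omega))
        rw [if_neg (by rintro ⟨h1, h2⟩; omega), if_neg (by rintro ⟨h1, h2⟩; omega),
          if_neg (by rintro ⟨rfl, h2, h3'⟩; omega), if_neg hca]
    · have hr0 : ¬((r : ℕ) = j - 2) := fun h => hra (Fin.ext (by omega))
      have hr1 : ¬((r : ℕ) = j - 1) := fun h => hrb (Fin.ext (by omega))
      rw [Equiv.swap_apply_of_ne_of_ne hra hrb]
      rcases eq_or_ne c r with rfl | hcr
      · rw [if_neg (by rintro ⟨h1, h2⟩; omega), if_neg (by rintro ⟨h1, h2⟩; omega),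
          if_pos ⟨rfl, hr0, hr1⟩, if_pos rfl]
      · rw [if_neg (by rintro ⟨h1, h2⟩; omega), if_neg (by rintro ⟨h1, h2⟩; omega),
          if_neg (by rintro ⟨h1, h2⟩; exact hcr h1.symm), if_neg hcr]

lemma smat_eq' (hn : 2 ≤ n) (j : ℕ) (h3 : 3 ≤ j) (hjn : j ≤ n) (a b : Fin n)
    (haj : (a : ℕ) = j - 2) (hbj : (b : ℕ) = j - 1) :
    smat n j = Mm (Equiv.swap a b) (gf a b 1) := by
  obtain ⟨av, hav⟩ := a
  obtain ⟨bv, hbv⟩ := b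
  have h1 : av = j - 2 := haj
  have h2 : bv = j - 1 := hbj
  subst h1
  subst h2
  exact smat_eq hn j h3 hjn

lemma Pcnt_a0 (σ : Equiv.Perm (Fin n)) {a : Fin n} (ha : (a : ℕ) = 0) (r : Fin n) :
    Pcnt σ a r = 0 := by
  rw [Pcnt, Finset.card_eq_zero, Finset.filter_eq_empty_iff]
  rintro x - ⟨-, hlt⟩
  have := hlt
  rw [Fin.lt_def, ha] at this
  omega

end gens

section lower
variable {e : ℕ}

lemma phiD_one : phiD (1 : Equiv.Perm (Fin n)) (fun _ => (1 : ℂ)) = 0 := by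
  unfold phiD badD
  have h1 : ∑ i : Fin n, IV (1 : Equiv.Perm (Fin n)) i = 0 := by
    apply Finset.sum_eq_zero
    intro i _
    rw [IV, Finset.card_eq_zero, Finset.filter_eq_empty_iff]
    rintro j - ⟨h1, h2⟩
    simp only [Equiv.Perm.one_apply] at h2
    exact absurd h2 (not_lt.2 (le_of_lt h1))
  have h2 : ∑ i : Fin n, (if (1 : ℂ) = 1 then 0 else ND (1 : Equiv.Perm (Fin n)) i) = 0 := by
    apply Finset.sum_eq_zero
    intro i _
    rw [if_pos rfl]
  rw [h1, h2, mul_zero]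
  rfl

lemma gf_one (a b : Fin n) : gf a b (1 : ℂ) = fun _ => (1 : ℂ) := by
  funext c
  unfold gf
  split_ifs <;> simp

lemma phiD_mul_le (σ : Equiv.Perm (Fin n)) (z : Fin n → ℂ) {a b : Fin n}
    (hab : a < b) (hadj : ∀ c, a < c → b ≤ c) (u : Fin n → ℂ)
    (hu : ∀ c, c ≠ a → c ≠ b → u c = 1)
    (hextra : (a : ℕ) = 0 ∨ u = fun _ => (1 : ℂ)) :
    phiD (σ.trans (Equiv.swap a b)) (fun i => z i * u (σ i)) ≤ phiD σ z + 1 := by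
  have H := step_main σ z hab hadj u hu
  have hrab : σ.symm a ≠ σ.symm b := fun h => hab.ne (by
    have := congrArg σ h
    rwa [σ.apply_symm_apply, σ.apply_symm_apply] at this)
  rcases hextra with ha0 | rfl
  · rw [Pcnt_a0 σ ha0, Pcnt_a0 σ ha0] at H
    rcases lt_or_gt_of_ne hrab with h | h
    · rw [if_neg (asymm h), if_pos h] at H
      split_ifs at H <;> omega
    · rw [if_pos h, if_neg (asymm h)] at H
      split_ifs at H <;> omega
  · simp only [mul_one] at H ⊢
    rcases lt_or_gt_of_ne hrab with h | h
    · rw [if_neg (asymm h), if_pos h] at H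
      split_ifs at H <;> omega
    · rw [if_pos h, if_neg (asymm h)] at H
      split_ifs at H <;> omega

lemma words_bound (e : ℕ) (hn : 2 ≤ n) (l : List (Matrix (Fin n) (Fin n) ℂ))
    (hl : ∀ x ∈ l, x ∈ Xset e n) :
    ∃ (σ : Equiv.Perm (Fin n)) (z : Fin n → ℂ),
      (∀ i, z i ≠ 0) ∧ l.prod = Mm σ z ∧ phiD σ z ≤ l.length := by
  induction l using List.reverseRecOn with
  | nil =>
    refine ⟨1, fun _ => 1, fun i => one_ne_zero, ?_, ?_⟩
    · rw [List.prod_nil, Mm_one]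
    · rw [phiD_one]
      exact Nat.zero_le _
  | append_singleton l g IH =>
    obtain ⟨σ, z, hz0, hprod, hbound⟩ :=
      IH fun x hx => hl x (List.mem_append_left _ hx)
    have hg : g ∈ Xset e n := hl g (List.mem_append_right _ (List.mem_singleton_self g))
    have hlen : (l ++ [g]).length = l.length + 1 := by
      rw [List.length_append, List.length_singleton]
    have hprod' : (l ++ [g]).prod = l.prod * g := by
      rw [List.prod_append, List.prod_singleton]
    rcases hg with ⟨i, hie, rfl⟩ | ⟨j, h3, hjn, rfl⟩
    · set a : Fin n := ⟨0, by omega⟩ with ha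
      set b : Fin n := ⟨1, by omega⟩ with hb
      set x : ℂ := zeta e ^ (-(i : ℤ)) with hx
      have hab : a < b := by
        rw [Fin.lt_def]
        show (0 : ℕ) < 1
        omega
      have hadj : ∀ c, a < c → b ≤ c := by
        intro c hc
        rw [Fin.lt_def] at hc
        rw [Fin.le_def]
        show (1 : ℕ) ≤ (c : ℕ)
        have : (0 : ℕ) < (c : ℕ) := hc
        omega
      have hxne : x ≠ 0 := zpow_ne_zero _ (zeta_ne_zero e)
      refine ⟨σ.trans (Equiv.swap a b), fun r => z r * gf a b x (σ r), ?_, ?_, ?_⟩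
      · intro r
        exact mul_ne_zero (hz0 r) (gf_ne_zero hxne _)
      · rw [hprod', hprod, tmat_eq e hn (i : ℤ), Mm_mul]
      · rw [hlen]
        calc phiD (σ.trans (Equiv.swap a b)) (fun r => z r * gf a b x (σ r))
            ≤ phiD σ z + 1 :=
              phiD_mul_le σ z hab hadj _ (fun c h1 h2 => gf_off x h1 h2) (Or.inl rfl)
          _ ≤ l.length + 1 := by omega
    · set a : Fin n := ⟨j - 2, by omega⟩ with ha
      set b : Fin n := ⟨j - 1, by omega⟩ with hb
      have hab : a < b := by
        rw [Fin.lt_def]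
        show j - 2 < j - 1
        omega
      have hadj : ∀ c, a < c → b ≤ c := by
        intro c hc
        rw [Fin.lt_def] at hc
        rw [Fin.le_def]
        show j - 1 ≤ (c : ℕ)
        have : j - 2 < (c : ℕ) := hc
        omega
      refine ⟨σ.trans (Equiv.swap a b), fun r => z r * gf a b (1 : ℂ) (σ r), ?_, ?_, ?_⟩
      · intro r
        exact mul_ne_zero (hz0 r) (gf_ne_zero one_ne_zero _)
      · rw [hprod', hprod, smat_eq hn j h3 hjn, Mm_mul]
      · rw [hlen]
        calc phiD (σ.trans (Equiv.swap a b)) (fun r => z r * gf a b (1 : ℂ) (σ r))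
            ≤ phiD σ z + 1 :=
              phiD_mul_le σ z hab hadj _ (fun c h1 h2 => gf_off 1 h1 h2) (Or.inr (gf_one a b))
          _ ≤ l.length + 1 := by omega

end lower

section upper
variable {e : ℕ}

lemma trivial_of_nodesc (hn : 2 ≤ n) (σ : Equiv.Perm (Fin n)) (z : Fin n → ℂ)
    (hzp : ∏ i, z i = 1)
    (h01 : σ.symm ⟨0, by omega⟩ < σ.symm ⟨1, by omega⟩)
    (hz1 : z (σ.symm ⟨1, by omega⟩) = 1)
    (hstep : ∀ m k : Fin n, (m : ℕ) + 1 = (k : ℕ) → 1 ≤ (m : ℕ) →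
      (z (σ.symm m) = 1 → σ.symm m < σ.symm k) ∧
      (σ.symm m < σ.symm k → z (σ.symm k) = 1)) :
    σ = 1 ∧ ∀ i, z i = 1 := by
  have chain : ∀ m : ℕ, ∀ h : m < n,
      ((1 ≤ m → z (σ.symm ⟨m, h⟩) = 1) ∧
       (∀ h' : m + 1 < n, σ.symm ⟨m, h⟩ < σ.symm ⟨m + 1, h'⟩)) := by
    intro m
    induction m with
    | zero =>
      intro h
      refine ⟨by omega, fun h' => h01⟩
    | succ m IH =>
      intro h
      have hm : m < n := by omega
      have hz : z (σ.symm ⟨m + 1, h⟩) = 1 := by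
        rcases Nat.eq_zero_or_pos m with rfl | hm1
        · exact hz1
        · have hzm : z (σ.symm ⟨m, hm⟩) = 1 := (IH hm).1 hm1
          exact (hstep ⟨m, hm⟩ ⟨m + 1, h⟩ rfl hm1).2 ((IH hm).2 h)
      refine ⟨fun _ => hz, ?_⟩
      intro h'
      exact (hstep ⟨m + 1, h⟩ ⟨m + 1 + 1, h'⟩ rfl (by show 1 ≤ m + 1; omega)).1 hz
  have mono : ∀ m : ℕ, ∀ h : m < n, m ≤ (σ.symm ⟨m, h⟩ : ℕ) := by
    intro m
    induction m with
    | zero => intro h; omega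
    | succ m IH =>
      intro h
      have hm : m < n := by omega
      have h1 := (chain m hm).2 h
      rw [Fin.lt_def] at h1
      have h2 := IH hm
      omega
  have aux : ∀ d : ℕ, ∀ m : ℕ, ∀ h : m < n, m + d = n - 1 →
      (σ.symm ⟨m, h⟩ : ℕ) + d ≤ n - 1 := by
    intro d
    induction d with
    | zero =>
      intro m h _
      have := (σ.symm ⟨m, h⟩).isLt
      omega
    | succ d IH =>
      intro m h hmd
      have h' : m + 1 < n := by omega
      have hlt := (chain m h).2 h'
      rw [Fin.lt_def] at hlt
      have := IH (m + 1) h' (by omega)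
      omega
  have hfix : ∀ m : ℕ, ∀ h : m < n, (σ.symm ⟨m, h⟩ : ℕ) = m := by
    intro m h
    have h1 := mono m h
    have h2 := aux (n - 1 - m) m h (by omega)
    omega
  have hsymm : σ.symm = 1 := by
    apply Equiv.ext
    intro i
    have := hfix (i : ℕ) i.isLt
    rw [Fin.eta] at this
    exact Fin.ext this
  have hσ : σ = 1 := by
    have h := congrArg Equiv.symm hsymm
    rw [Equiv.symm_symm] at h
    rw [h]
    rfl
  have hz : ∀ i : Fin n, 1 ≤ (i : ℕ) → z i = 1 := by
    intro i hi
    have h := (chain (i : ℕ) i.isLt).1 hi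
    rw [hsymm] at h
    simpa [Fin.eta] using h
  refine ⟨hσ, ?_⟩
  have hz0' : z ⟨0, by omega⟩ = 1 := by
    have h := hzp
    rw [Finset.prod_eq_single (⟨0, by omega⟩ : Fin n)] at h
    · exact h
    · intro b _ hb
      apply hz
      have : (b : ℕ) ≠ 0 := fun hc => hb (Fin.ext hc)
      omega
    · intro hc
      exact absurd (Finset.mem_univ _) hc
  intro i
  rcases Nat.eq_zero_or_pos (i : ℕ) with h0 | h1
  · have : i = ⟨0, by omega⟩ := Fin.ext h0
    rw [this]
    exact hz0'
  · exact hz i h1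

lemma descent (he : 2 ≤ e) (hn : 2 ≤ n) (σ : Equiv.Perm (Fin n)) (z : Fin n → ℂ)
    (hz0 : ∀ i, z i ≠ 0) (hze : ∀ i, z i ^ e = 1) (hzp : ∏ i, z i = 1)
    (hnt : ¬(σ = 1 ∧ ∀ i, z i = 1)) :
    ∃ (a b : Fin n) (u : Fin n → ℂ),
      Mm (Equiv.swap a b) u ∈ Xset e n ∧ a ≠ b ∧
      (∀ c, u c ≠ 0) ∧ (∀ c, u c ^ e = 1) ∧ (∏ c, u c = 1) ∧
      (∀ c, u c * u (Equiv.swap a b c) = 1) ∧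
      phiD (σ.trans (Equiv.swap a b)) (fun i => z i * u (σ i)) + 1 = phiD σ z := by
  haveI : NeZero e := ⟨by omega⟩
  set a0 : Fin n := ⟨0, by omega⟩ with ha0
  set a1 : Fin n := ⟨1, by omega⟩ with ha1
  have hab : a0 < a1 := by
    rw [Fin.lt_def]
    show (0 : ℕ) < 1
    omega
  have hadj : ∀ c, a0 < c → a1 ≤ c := by
    intro c hc
    rw [Fin.lt_def] at hc
    rw [Fin.le_def]
    show (1 : ℕ) ≤ (c : ℕ)
    have : (0 : ℕ) < (c : ℕ) := hc
    omega
  have hrab : σ.symm a0 ≠ σ.symm a1 := fun h => hab.ne (by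
    have := congrArg σ h
    rwa [σ.apply_symm_apply, σ.apply_symm_apply] at this)
  by_cases hA : σ.symm a1 < σ.symm a0
  · obtain ⟨i, hie, hzi⟩ := (zeta_prim e (by omega)).eq_pow_of_pow_eq_one (hze (σ.symm a0))
    set x : ℂ := zeta e ^ (-(i : ℤ)) with hx
    have hxne : x ≠ 0 := zpow_ne_zero _ (zeta_ne_zero e)
    have hxe : x ^ e = 1 := zeta_zpow_pow e (by omega) _
    refine ⟨a0, a1, gf a0 a1 x, Or.inl ⟨i, hie, (tmat_eq e hn (i : ℤ)).symm⟩, hab.ne,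
      gf_ne_zero hxne, gf_pow hxe, gf_prod hab.ne hxne, gf_invol hab.ne hxne, ?_⟩
    have H := step_main σ z hab hadj (gf a0 a1 x) (fun c h1 h2 => gf_off x h1 h2)
    rw [Pcnt_a0 σ rfl, Pcnt_a0 σ rfl, if_pos hA, if_neg (asymm hA)] at H
    have key : z (σ.symm a0) * gf a0 a1 x a0 = 1 := by
      have g1 : gf a0 a1 x a0 = x := if_pos rfl
      rw [g1, hx, ← hzi, ← zpow_natCast (zeta e) i, ← _root_.zpow_add₀ (zeta_ne_zero e)]
      rw [add_neg_cancel, zpow_zero]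
    rw [if_pos key] at H
    split_ifs at H <;> omega
  · have hr01 : σ.symm a0 < σ.symm a1 := lt_of_le_of_ne (not_lt.1 hA) hrab
    by_cases hB : z (σ.symm a1) = 1
    · by_cases hC : ∃ m k : Fin n, (m : ℕ) + 1 = (k : ℕ) ∧ 1 ≤ (m : ℕ) ∧
          ((z (σ.symm m) = 1 ∧ σ.symm k < σ.symm m) ∨
           (σ.symm m < σ.symm k ∧ z (σ.symm k) ≠ 1))
      · obtain ⟨m, k, hmk, hm1, hviol⟩ := hC
        have hab' : m < k := by
          rw [Fin.lt_def]
          omega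
        have hadj' : ∀ c, m < c → k ≤ c := by
          intro c hc
          rw [Fin.lt_def] at hc
          rw [Fin.le_def]
          omega
        have hkn : (k : ℕ) < n := k.isLt
        have heq : smat n ((m : ℕ) + 2) = Mm (Equiv.swap m k) (gf m k (1 : ℂ)) :=
          smat_eq' hn ((m : ℕ) + 2) (by omega) (by omega) m k (by omega) (by omega)
        have hXmem : Mm (Equiv.swap m k) (gf m k (1 : ℂ)) ∈ Xset e n := by
          simp only [Xset, Set.mem_setOf_eq]
          exact Or.inr ⟨(m : ℕ) + 2, by omega, by omega, heq.symm⟩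
        refine ⟨m, k, gf m k 1, hXmem, hab'.ne, gf_ne_zero one_ne_zero,
          gf_pow (one_pow e), gf_prod hab'.ne one_ne_zero, gf_invol hab'.ne one_ne_zero, ?_⟩
        have H := step_main σ z hab' hadj' (gf m k 1) (fun c h1 h2 => gf_off 1 h1 h2)
        rw [gf_one m k] at H ⊢
        simp only [mul_one] at H ⊢
        rcases hviol with ⟨hzm, hlt⟩ | ⟨hlt, hzk⟩
        · rw [if_pos hlt, if_neg (asymm hlt), if_pos hzm, if_pos hzm] at H
          split_ifs at H <;> omega
        · rw [if_neg (asymm hlt), if_pos hlt, if_neg hzk, if_neg hzk] at H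
          split_ifs at H <;> omega
      · exfalso
        apply hnt
        apply trivial_of_nodesc hn σ z hzp hr01 hB
        intro m k hmk hm1
        have habs : ¬((z (σ.symm m) = 1 ∧ σ.symm k < σ.symm m) ∨
            (σ.symm m < σ.symm k ∧ z (σ.symm k) ≠ 1)) :=
          fun h => hC ⟨m, k, hmk, hm1, h⟩
        rw [not_or] at habs
        obtain ⟨h1, h2⟩ := habs
        have hmk' : σ.symm m ≠ σ.symm k := by
          intro h
          have := congrArg σ h
          rw [σ.apply_symm_apply, σ.apply_symm_apply] at this
          rw [this] at hmk
          omega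
        constructor
        · intro hzm
          have : ¬ σ.symm k < σ.symm m := fun h => h1 ⟨hzm, h⟩
          exact lt_of_le_of_ne (not_lt.1 this) hmk'
        · intro hlt
          by_contra hne
          exact h2 ⟨hlt, hne⟩
    · set x : ℂ := zeta e ^ (-((0 : ℕ) : ℤ)) with hx
      have hx1 : x = 1 := by
        rw [hx]
        norm_num
      have hxne : x ≠ 0 := by
        rw [hx1]
        exact one_ne_zero
      have hxe : x ^ e = 1 := by
        rw [hx1, one_pow]
      refine ⟨a0, a1, gf a0 a1 x, Or.inl ⟨0, by omega, (tmat_eq e hn ((0 : ℕ) : ℤ)).symm⟩,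
        hab.ne, gf_ne_zero hxne, gf_pow hxe, gf_prod hab.ne hxne, gf_invol hab.ne hxne, ?_⟩
      have H := step_main σ z hab hadj (gf a0 a1 x) (fun c h1 h2 => gf_off x h1 h2)
      rw [Pcnt_a0 σ rfl, Pcnt_a0 σ rfl, if_neg (asymm hr01), if_pos hr01] at H
      have key1 : z (σ.symm a1) * gf a0 a1 x a1 = z (σ.symm a1) := by
        have g2 : gf a0 a1 x a1 = x⁻¹ := by
          show (if a1 = a0 then x else if a1 = a1 then x⁻¹ else 1) = x⁻¹
          rw [if_neg (Ne.symm hab.ne), if_pos rfl]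
        rw [g2, hx1, inv_one, mul_one]
      rw [key1, if_neg hB, if_neg hB] at H
      split_ifs at H <;> omega

lemma exists_word (he : 2 ≤ e) (hn : 2 ≤ n) :
    ∀ N : ℕ, ∀ (σ : Equiv.Perm (Fin n)) (z : Fin n → ℂ),
      (∀ i, z i ≠ 0) → (∀ i, z i ^ e = 1) → (∏ i, z i = 1) → phiD σ z = N →
      ∃ l : List (Matrix (Fin n) (Fin n) ℂ),
        (∀ x ∈ l, x ∈ Xset e n) ∧ l.length = phiD σ z ∧ l.prod = Mm σ z := by
  intro N
  induction N using Nat.strong_induction_on with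
  | _ N IH =>
    intro σ z hz0 hze hzp hN
    by_cases htriv : σ = 1 ∧ ∀ i, z i = 1
    · have hz : z = fun _ => 1 := funext htriv.2
      refine ⟨[], fun x hx => absurd hx List.not_mem_nil, ?_, ?_⟩
      · rw [List.length_nil, htriv.1, hz, phiD_one]
      · rw [List.prod_nil, htriv.1, hz, Mm_one]
    · obtain ⟨a, b, u, hX, hne, hu0, hue, hup, hinv, hphi⟩ :=
        descent he hn σ z hz0 hze hzp htriv
      have hz0' : ∀ i, z i * u (σ i) ≠ 0 := fun i => mul_ne_zero (hz0 i) (hu0 _)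
      have hze' : ∀ i, (z i * u (σ i)) ^ e = 1 := fun i => by
        rw [mul_pow, hze, hue, one_mul]
      have hzp' : ∏ i, z i * u (σ i) = 1 := by
        rw [Finset.prod_mul_distrib, hzp, one_mul, Equiv.prod_comp σ u, hup]
      obtain ⟨l, hl, hlen, hprod⟩ :=
        IH (phiD (σ.trans (Equiv.swap a b)) (fun i => z i * u (σ i))) (by omega)
          (σ.trans (Equiv.swap a b)) (fun i => z i * u (σ i)) hz0' hze' hzp' rfl
      refine ⟨l ++ [Mm (Equiv.swap a b) u], ?_, ?_, ?_⟩
      · intro x hx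
        rcases List.mem_append.1 hx with h | h
        · exact hl x h
        · rw [List.mem_singleton.1 h]
          exact hX
      · rw [List.length_append, List.length_singleton, hlen]
        omega
      · rw [List.prod_append, List.prod_singleton, hprod, Mm_mul]
        have hperm : (σ.trans (Equiv.swap a b)).trans (Equiv.swap a b) = σ := by
          rw [Equiv.trans_assoc, Equiv.swap_swap, Equiv.trans_refl]
        have hval : (fun i => z i * u (σ i) * u ((σ.trans (Equiv.swap a b)) i)) = z := by
          funext i
          rw [mul_assoc, Equiv.trans_apply, hinv (σ i), mul_one]
        rw [hperm, hval]

lemma len_Mm (he : 2 ≤ e) (hn : 2 ≤ n) (σ : Equiv.Perm (Fin n)) (z : Fin n → ℂ)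
    (hz0 : ∀ i, z i ≠ 0) (hze : ∀ i, z i ^ e = 1) (hzp : ∏ i, z i = 1) :
    len e n (Mm σ z) = phiD σ z := by
  obtain ⟨l, hl, hlen, hprod⟩ := exists_word he hn (phiD σ z) σ z hz0 hze hzp rfl
  have hmem : phiD σ z ∈ {r | ∃ l' : List (Matrix (Fin n) (Fin n) ℂ),
      (∀ x ∈ l', x ∈ Xset e n) ∧ l'.length = r ∧ l'.prod = Mm σ z} := ⟨l, hl, hlen, hprod⟩
  apply le_antisymm (Nat.sInf_le hmem)
  obtain ⟨l₀, hl₀, hlen₀, hprod₀⟩ := Nat.sInf_mem (⟨_, hmem⟩ : Set.Nonempty _)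
  obtain ⟨σ', z', hz'0, hp', hb'⟩ := words_bound e hn l₀ hl₀
  rw [hprod₀] at hp'
  obtain ⟨h1, h2⟩ := Mm_inj hz'0 hp'.symm
  subst h1
  subst h2
  rw [hlen₀] at hb'
  exact hb'

end upper

section geen
variable {e : ℕ}

lemma Mm_ne_zero_iff (σ : Equiv.Perm (Fin n)) (z : Fin n → ℂ) (hz0 : ∀ i, z i ≠ 0)
    (i c : Fin n) : Mm σ z i c ≠ 0 ↔ c = σ i := by
  show (if c = σ i then z i else 0) ≠ 0 ↔ c = σ i
  constructor
  · intro h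
    by_contra hc
    rw [if_neg hc] at h
    exact h rfl
  · intro h
    rw [if_pos h]
    exact hz0 i

lemma isGeen_Mm (σ : Equiv.Perm (Fin n)) (z : Fin n → ℂ)
    (hz0 : ∀ i, z i ≠ 0) (hze : ∀ i, z i ^ e = 1) (hzp : ∏ i, z i = 1) :
    IsGeen e n (Mm σ z) := by
  have hne := Mm_ne_zero_iff σ z hz0
  refine ⟨?_, ?_, ?_, ?_⟩
  · intro i
    refine ⟨σ i, (hne i (σ i)).2 rfl, fun j hj => (hne i j).1 hj⟩
  · intro c
    refine ⟨σ.symm c, ?_, ?_⟩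
    · exact (hne (σ.symm c) c).2 (σ.apply_symm_apply c).symm
    · intro i hi
      have h1 := (hne i c).1 hi
      exact σ.eq_symm_apply.2 h1.symm
  · intro i c h
    have hc := (hne i c).1 h
    show (if c = σ i then z i else 0) ^ e = 1
    rw [if_pos hc]
    exact hze i
  · have hrow : ∀ i, (∏ c, if Mm σ z i c ≠ 0 then Mm σ z i c else 1) = z i := by
      intro i
      rw [Finset.prod_eq_single (σ i)]
      · rw [if_pos ((hne i (σ i)).2 rfl)]
        show (if σ i = σ i then z i else 0) = z i
        rw [if_pos rfl]
      · intro c _ hc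
        rw [if_neg (fun hh => hc ((hne i c).1 hh))]
      · intro h
        exact absurd (Finset.mem_univ _) h
    calc ∏ i, ∏ c, (if Mm σ z i c ≠ 0 then Mm σ z i c else 1)
        = ∏ i, z i := Finset.prod_congr rfl fun i _ => hrow i
      _ = 1 := hzp

lemma isGeen_data {w : Matrix (Fin n) (Fin n) ℂ} (hw : IsGeen e n w) :
    ∃ (σ : Equiv.Perm (Fin n)) (z : Fin n → ℂ),
      (∀ i, z i ≠ 0) ∧ (∀ i, z i ^ e = 1) ∧ (∏ i, z i = 1) ∧ w = Mm σ z := by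
  obtain ⟨hrow, hcol, hpow, hprod⟩ := hw
  choose f hf hf' using hrow
  have hinj : Function.Injective f := by
    intro i1 i2 h
    obtain ⟨i₀, hi₀, hu⟩ := hcol (f i1)
    have e1 := hu i1 (hf i1)
    have e2 := hu i2 (by rw [h]; exact hf i2)
    exact e1.trans e2.symm
  let σ : Equiv.Perm (Fin n) := Equiv.ofBijective f (Finite.injective_iff_bijective.1 hinj)
  have hσ : ∀ i, σ i = f i := fun i => rfl
  refine ⟨σ, fun i => w i (f i), fun i => hf i, fun i => hpow i (f i) (hf i), ?_, ?_⟩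
  · have hthis : (∏ i, ∏ j, (if w i j ≠ 0 then w i j else 1)) = ∏ i, w i (f i) := by
      apply Finset.prod_congr rfl
      intro i _
      rw [Finset.prod_eq_single (f i)]
      · rw [if_pos (hf i)]
      · intro c _ hc
        rw [if_neg (fun hh => hc (hf' i c hh))]
      · intro h
        exact absurd (Finset.mem_univ _) h
    rw [← hthis]
    exact hprod
  · ext i c
    show w i c = if c = σ i then w i (f i) else 0
    by_cases hc : c = f i
    · subst hc
      rw [if_pos (hσ i).symm]
    · rw [if_neg (fun h => hc (h.trans (hσ i)))]
      by_contra hh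
      exact hc (hf' i c hh)

noncomputable def dfun (e' n' : ℕ) : Fin n' → ℂ :=
  fun i => if (i : ℕ) = 0 then zeta e' ^ (-(n' - 1 : ℤ)) else zeta e'

lemma lam_eq : lam e n = Mm 1 (dfun e n) := by
  ext i c
  show Matrix.diagonal _ i c = (if c = (1 : Equiv.Perm (Fin n)) i then dfun e n i else 0)
  rw [Matrix.diagonal_apply]
  have h1 : (1 : Equiv.Perm (Fin n)) i = i := rfl
  rw [h1]
  rcases eq_or_ne i c with rfl | h
  · rw [if_pos rfl, if_pos rfl]
    rfl
  · rw [if_neg h, if_neg (Ne.symm h)]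

lemma lam_pow (k : ℕ) : lam e n ^ k = Mm 1 (fun i => dfun e n i ^ k) := by
  induction k with
  | zero =>
    have h0 : (fun i : Fin n => dfun e n i ^ 0) = fun _ => (1 : ℂ) := by
      funext i
      rw [pow_zero]
    rw [pow_zero, h0, Mm_one]
  | succ k IH =>
    rw [pow_succ, IH, lam_eq, Mm_mul]
    have h2 : (fun i => dfun e n i ^ k * dfun e n ((1 : Equiv.Perm (Fin n)) i))
        = fun i => dfun e n i ^ (k + 1) := by
      funext i
      show dfun e n i ^ k * dfun e n i = _
      rw [pow_succ]
    rw [h2]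
    have h3 : Equiv.trans (1 : Equiv.Perm (Fin n)) (1 : Equiv.Perm (Fin n)) = (1 : Equiv.Perm (Fin n)) := rfl
    rw [h3]

lemma dfun_ne_zero (he : e ≠ 0) : ∀ i : Fin n, dfun e n i ≠ 0 := by
  intro i
  unfold dfun
  split_ifs
  · exact zpow_ne_zero _ (zeta_ne_zero e)
  · exact zeta_ne_zero e

lemma dfun_pow_e (he : e ≠ 0) : ∀ i : Fin n, dfun e n i ^ e = 1 := by
  intro i
  unfold dfun
  split_ifs
  · exact zeta_zpow_pow e he _
  · exact zeta_pow_e e he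

lemma dfun_prod (he : e ≠ 0) (hn : 2 ≤ n) (k : ℕ) : ∏ i : Fin n, dfun e n i ^ k = 1 := by
  have h0 : ((⟨0, by omega⟩ : Fin n) : ℕ) = 0 := rfl
  rw [← Finset.mul_prod_erase Finset.univ _ (Finset.mem_univ (⟨0, by omega⟩ : Fin n))]
  have h1 : dfun e n (⟨0, by omega⟩ : Fin n) = zeta e ^ (-(n - 1 : ℤ)) := if_pos h0
  have h2 : ∏ i ∈ Finset.univ.erase (⟨0, by omega⟩ : Fin n), dfun e n i ^ k
      = (zeta e ^ k) ^ (n - 1) := by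
    rw [Finset.prod_congr rfl (fun i hi => ?_), Finset.prod_const]
    · congr 1
      rw [Finset.card_erase_of_mem (Finset.mem_univ _), Finset.card_univ, Fintype.card_fin]
    · have hi0 : (i : ℕ) ≠ 0 := by
        intro hc
        exact (Finset.mem_erase.1 hi).1 (Fin.ext hc)
      show dfun e n i ^ k = zeta e ^ k
      rw [dfun, if_neg hi0]
  rw [h1, h2]
  rw [← _root_.zpow_natCast (zeta e ^ (-(n - 1 : ℤ))) k, ← _root_.zpow_mul]
  rw [← pow_mul, ← _root_.zpow_natCast (zeta e) (k * (n - 1)), ← _root_.zpow_add₀ (zeta_ne_zero e)]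
  rw [← zpow_zero (zeta e)]
  congr 1
  push_cast [Nat.cast_sub (by omega : 1 ≤ n)]
  ring

lemma ND_zero_row (σ : Equiv.Perm (Fin n)) {i : Fin n} (hi : (i : ℕ) = 0) : ND σ i = 0 := by
  rw [ND, Finset.card_eq_zero, Finset.filter_eq_empty_iff]
  rintro j - ⟨h1, -⟩
  rw [Fin.lt_def, hi] at h1
  omega

end geen

section keyeq
variable {e : ℕ}

lemma IV_one (i : Fin n) : IV (1 : Equiv.Perm (Fin n)) i = 0 := by
  rw [IV, Finset.card_eq_zero, Finset.filter_eq_empty_iff]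
  rintro j - ⟨h1, h2⟩
  have h2' : i < j := h2
  exact absurd h2' (not_lt.2 (le_of_lt h1))

lemma ND_symm (σ : Equiv.Perm (Fin n)) (i : Fin n) : ND σ.symm (σ i) = ND σ i := by
  unfold ND
  apply Finset.card_nbij' (fun j => σ.symm j) (fun j => σ j)
  · intro j hj
    rcases Finset.mem_filter.1 hj with ⟨-, h1, h2⟩
    rw [σ.symm_apply_apply] at h2
    refine Finset.mem_filter.2 ⟨Finset.mem_univ _, h2, ?_⟩
    rw [σ.apply_symm_apply]
    exact h1
  · intro j hj
    rcases Finset.mem_filter.1 hj with ⟨-, h1, h2⟩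
    refine Finset.mem_filter.2 ⟨Finset.mem_univ _, h2, ?_⟩
    rw [σ.symm_apply_apply, σ.symm_apply_apply]
    exact h1
  · intro j _
    exact σ.apply_symm_apply j
  · intro j _
    exact σ.symm_apply_apply j

lemma sum_IV_eq_card (τ : Equiv.Perm (Fin n)) : ∑ i, IV τ i
    = (Finset.univ.filter fun p : Fin n × Fin n => p.2 < p.1 ∧ τ p.1 < τ p.2).card := by
  rw [Finset.card_eq_sum_card_fiberwise (fun p _ => Finset.mem_univ p.1)]
  apply Finset.sum_congr rfl
  intro i _
  unfold IV
  apply Finset.card_nbij' (fun j => (i, j)) (fun p => p.2)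
  · intro j hj
    rcases Finset.mem_filter.1 hj with ⟨-, h1, h2⟩
    exact Finset.mem_filter.2 ⟨Finset.mem_filter.2 ⟨Finset.mem_univ _, h1, h2⟩, rfl⟩
  · intro p hp
    rcases Finset.mem_filter.1 hp with ⟨hp1, hp2⟩
    rcases Finset.mem_filter.1 hp1 with ⟨-, h1, h2⟩
    rw [hp2] at h1 h2
    exact Finset.mem_filter.2 ⟨Finset.mem_univ _, h1, h2⟩
  · intro j _
    rfl
  · intro p hp
    have hp2 : p.1 = i := (Finset.mem_filter.1 hp).2
    exact Prod.ext hp2.symm rfl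

lemma sum_IV_symm (σ : Equiv.Perm (Fin n)) : ∑ c, IV σ.symm c = ∑ i, IV σ i := by
  rw [sum_IV_eq_card, sum_IV_eq_card]
  apply Finset.card_nbij' (fun p => (σ.symm p.2, σ.symm p.1)) (fun p => (σ p.2, σ p.1))
  · intro p hp
    rcases Finset.mem_filter.1 hp with ⟨-, h1, h2⟩
    refine Finset.mem_filter.2 ⟨Finset.mem_univ _, h2, ?_⟩
    rw [σ.apply_symm_apply, σ.apply_symm_apply]
    exact h1
  · intro p hp
    rcases Finset.mem_filter.1 hp with ⟨-, h1, h2⟩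
    refine Finset.mem_filter.2 ⟨Finset.mem_univ _, h2, ?_⟩
    rw [σ.symm_apply_apply, σ.symm_apply_apply]
    exact h1
  · intro p _
    show (σ (σ.symm p.1), σ (σ.symm p.2)) = p
    rw [σ.apply_symm_apply, σ.apply_symm_apply]
  · intro p _
    show (σ.symm (σ p.1), σ.symm (σ p.2)) = p
    rw [σ.symm_apply_apply, σ.symm_apply_apply]

lemma key_equiv (σ : Equiv.Perm (Fin n)) (z y dk : Fin n → ℂ)
    (hz0 : ∀ i, z i ≠ 0)
    (hrel : ∀ i, z i * y (σ i) = dk i)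
    (hdkne : ∀ i : Fin n, (i : ℕ) ≠ 0 → dk i ≠ 1) :
    (phiD 1 dk = phiD σ z + phiD σ.symm y) ↔
      (∀ i, ND σ i ≠ 0 → (z i = 1 ∨ z i = dk i)) := by
  have hL : phiD 1 dk = 2 * ∑ i, ND (1 : Equiv.Perm (Fin n)) i := by
    unfold phiD badD
    have h1 : ∑ i : Fin n, IV (1 : Equiv.Perm (Fin n)) i = 0 :=
      Finset.sum_eq_zero fun i _ => IV_one i
    rw [h1, zero_add]
    congr 1
    apply Finset.sum_congr rfl
    intro i _
    rcases eq_or_ne ((i : ℕ)) 0 with h0 | h0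
    · rw [ND_zero_row (1 : Equiv.Perm (Fin n)) h0]
      exact ite_self 0
    · rw [if_neg (hdkne i h0)]
  have hsum1 : ∑ i, ND (1 : Equiv.Perm (Fin n)) i = ∑ i, IV σ i + ∑ i, ND σ i := by
    rw [← Finset.sum_add_distrib]
    apply Finset.sum_congr rfl
    intro i _
    rw [add_comm]
    exact (ND_add_IV σ i).symm
  have hR : phiD σ z + phiD σ.symm y
      = 2 * ∑ i, IV σ i + 2 * ∑ i, ((if z i = 1 then 0 else ND σ i)
          + (if y (σ i) = 1 then 0 else ND σ i)) := by
    unfold phiD badD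
    rw [sum_IV_symm σ]
    have hre : (∑ c, if y c = 1 then 0 else ND σ.symm c)
        = ∑ i, (if y (σ i) = 1 then 0 else ND σ i) := by
      rw [← Equiv.sum_comp σ (fun c => if y c = 1 then 0 else ND σ.symm c)]
      apply Finset.sum_congr rfl
      intro i _
      rw [ND_symm σ i]
    rw [hre, Finset.sum_add_distrib]
    ring
  have hmid : (phiD 1 dk = phiD σ z + phiD σ.symm y) ↔
      (∑ i, ND σ i = ∑ i, ((if z i = 1 then 0 else ND σ i)
          + (if y (σ i) = 1 then 0 else ND σ i))) := by
    rw [hL, hR, hsum1]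
    constructor <;> intro h <;> omega
  rw [hmid]
  have hle : ∀ i ∈ Finset.univ, ND σ i ≤ (if z i = 1 then 0 else ND σ i)
      + (if y (σ i) = 1 then 0 else ND σ i) := by
    intro i _
    by_cases hND : ND σ i = 0
    · rw [hND]
      exact Nat.zero_le _
    · have hi0 : (i : ℕ) ≠ 0 := fun h => hND (ND_zero_row σ h)
      have hnboth : ¬(z i = 1 ∧ y (σ i) = 1) := by
        rintro ⟨h1, h2⟩
        apply hdkne i hi0
        rw [← hrel i, h1, h2, one_mul]
      by_cases h1 : z i = 1
      · have h2 : y (σ i) ≠ 1 := fun h => hnboth ⟨h1, h⟩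
        rw [if_pos h1, if_neg h2, zero_add]
      · rw [if_neg h1]
        exact Nat.le_add_right _ _
  rw [Finset.sum_eq_sum_iff_of_le hle]
  constructor
  · intro h i hND
    have hthis := h i (Finset.mem_univ i)
    by_cases h1 : z i = 1
    · exact Or.inl h1
    · right
      by_cases h2 : y (σ i) = 1
      · rw [← hrel i, h2, mul_one]
      · exfalso
        rw [if_neg h1, if_neg h2] at hthis
        omega
  · intro h i _
    by_cases hND : ND σ i = 0
    · rw [hND]
      simp
    · have hi0 : (i : ℕ) ≠ 0 := fun hh => hND (ND_zero_row σ hh)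
      rcases h i hND with h1 | h1
      · have h2 : y (σ i) ≠ 1 := by
          intro hy
          apply hdkne i hi0
          rw [← hrel i, h1, hy, one_mul]
        rw [if_pos h1, if_neg h2, zero_add]
      · have h2 : y (σ i) = 1 := by
          have hthis := hrel i
          rw [← h1] at hthis
          exact mul_left_cancel₀ (hz0 i) (hthis.trans (mul_one (z i)).symm)
        have h1' : z i ≠ 1 := fun hh => hdkne i hi0 (h1.symm.trans hh)
        rw [if_neg h1', if_pos h2, add_zero]

lemma bullet_iff (σ : Equiv.Perm (Fin n)) (z : Fin n → ℂ) (hz0 : ∀ i, z i ≠ 0) (i : Fin n) :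
    (¬ IsBullet n (Mm σ z) i (σ i)) ↔ ND σ i ≠ 0 := by
  constructor
  · intro hnb hND
    apply hnb
    refine ⟨(Mm_ne_zero_iff σ z hz0 i (σ i)).2 rfl, ?_⟩
    intro i' c' h1 h2 hne
    by_contra hnz
    have hc' : c' = σ i' := (Mm_ne_zero_iff σ z hz0 i' c').1 hnz
    have hii : i' ≠ i := by
      intro hh
      subst hh
      exact hne (by rw [hc'])
    have h1' : i' < i := lt_of_le_of_ne h1 hii
    have hcc : σ i' < σ i := lt_of_le_of_ne (hc' ▸ h2) fun hh => hii (σ.injective hh)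
    have hmem : i' ∈ Finset.univ.filter (fun j => j < i ∧ σ j < σ i) :=
      Finset.mem_filter.2 ⟨Finset.mem_univ _, h1', hcc⟩
    rw [ND, Finset.card_eq_zero] at hND
    rw [hND] at hmem
    exact absurd hmem (Finset.notMem_empty _)
  · intro hND hb
    obtain ⟨j, hj⟩ := Finset.card_pos.1 (Nat.pos_of_ne_zero hND)
    rcases Finset.mem_filter.1 hj with ⟨-, hj1, hj2⟩
    have hz := hb.2 j (σ j) (le_of_lt hj1) (le_of_lt hj2) (by
      intro hh
      exact absurd (congrArg Prod.fst hh) (ne_of_lt hj1))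
    exact (Mm_ne_zero_iff σ z hz0 j (σ j)).2 rfl hz

end keyeq

end S12

/-- for `1 ≤ k ≤ e-1`, `w ≼ λ^k` iff every nonzero non-bullet entry of
`w` equals `1` or `ζ_e^k`. -/
theorem statement_12 (e n : ℕ) (hn : 2 ≤ n) (k : ℕ) (hk1 : 1 ≤ k) (hke : k ≤ e - 1)
    (w : Matrix (Fin n) (Fin n) ℂ) (hw : IsGeen e n w) :
    ldvd e n w (lam e n ^ k) ↔
      ∀ i c : Fin n, w i c ≠ 0 → ¬ IsBullet n w i c →
        (w i c = 1 ∨ w i c = zeta e ^ k) := by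
  have he2 : 2 ≤ e := by omega
  obtain ⟨σ, z, hz0, hze, hzp, hwM⟩ := S12.isGeen_data hw
  subst hwM
  set dk : Fin n → ℂ := fun i => S12.dfun e n i ^ k with hdkdef
  have hdk0 : ∀ i, dk i ≠ 0 := fun i => pow_ne_zero _ (S12.dfun_ne_zero (by omega) i)
  have hdke : ∀ i, dk i ^ e = 1 := by
    intro i
    show (S12.dfun e n i ^ k) ^ e = 1
    rw [← pow_mul, mul_comm, pow_mul, S12.dfun_pow_e (by omega) i, one_pow]
  have hdkp : ∏ i, dk i = 1 := S12.dfun_prod (by omega) hn k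
  have hdkval : ∀ i : Fin n, (i : ℕ) ≠ 0 → dk i = zeta e ^ k := by
    intro i hi
    show S12.dfun e n i ^ k = zeta e ^ k
    rw [S12.dfun, if_neg hi]
  have hdkne : ∀ i : Fin n, (i : ℕ) ≠ 0 → dk i ≠ 1 := by
    intro i hi
    rw [hdkval i hi]
    exact (S12.zeta_prim e (by omega)).pow_ne_one_of_pos_of_lt (by omega) (by omega)
  have hlamk : lam e n ^ k = S12.Mm 1 dk := S12.lam_pow k
  have hlen_lam : len e n (lam e n ^ k) = S12.phiD 1 dk := by
    rw [hlamk]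
    exact S12.len_Mm he2 hn 1 dk hdk0 hdke hdkp
  have hlen_w : len e n (S12.Mm σ z) = S12.phiD σ z := S12.len_Mm he2 hn σ z hz0 hze hzp
  constructor
  · rintro ⟨w'', hG, hEq, hLen⟩
    obtain ⟨τ, y, hy0, hye, hyp, hwM2⟩ := S12.isGeen_data hG
    subst hwM2
    rw [hlamk, S12.Mm_mul] at hEq
    obtain ⟨hperm, hval⟩ := S12.Mm_inj hdk0 hEq
    have hτ : τ = σ.symm := by
      apply Equiv.ext
      intro c
      have h := Equiv.ext_iff.1 hperm (σ.symm c)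
      simp only [Equiv.Perm.one_apply, Equiv.trans_apply, Equiv.apply_symm_apply] at h
      exact h.symm
    subst hτ
    have hrel : ∀ i, z i * y (σ i) = dk i := fun i => (congrFun hval i).symm
    rw [hlen_lam, hlen_w, S12.len_Mm he2 hn σ.symm y hy0 hye hyp] at hLen
    have hkey := (S12.key_equiv σ z y dk hz0 hrel hdkne).1 hLen
    intro i c hne hnb
    have hc : c = σ i := (S12.Mm_ne_zero_iff σ z hz0 i c).1 hne
    subst hc
    have hND : S12.ND σ i ≠ 0 := (S12.bullet_iff σ z hz0 i).1 hnb
    have hval_ic : S12.Mm σ z i (σ i) = z i := if_pos rfl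
    rw [hval_ic]
    rcases hkey i hND with h | h
    · exact Or.inl h
    · right
      have hi0 : (i : ℕ) ≠ 0 := fun hh => hND (S12.ND_zero_row σ hh)
      rw [h, hdkval i hi0]
  · intro hcond
    set y : Fin n → ℂ := fun c => (z (σ.symm c))⁻¹ * dk (σ.symm c) with hydef
    have hyσ : ∀ i, y (σ i) = (z i)⁻¹ * dk i := by
      intro i
      show (z (σ.symm (σ i)))⁻¹ * dk (σ.symm (σ i)) = _
      rw [σ.symm_apply_apply]
    have hy0 : ∀ c, y c ≠ 0 := fun c => mul_ne_zero (inv_ne_zero (hz0 _)) (hdk0 _)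
    have hye : ∀ c, y c ^ e = 1 := by
      intro c
      show ((z (σ.symm c))⁻¹ * dk (σ.symm c)) ^ e = 1
      rw [mul_pow, inv_pow, hze, hdke, inv_one, one_mul]
    have hyp : ∏ c, y c = 1 := by
      rw [← Equiv.prod_comp σ y, Finset.prod_congr rfl fun i _ => hyσ i,
        Finset.prod_mul_distrib, Finset.prod_inv_distrib, hzp, inv_one, one_mul, hdkp]
    have hrel : ∀ i, z i * y (σ i) = dk i := by
      intro i
      rw [hyσ i, mul_inv_cancel_left₀ (hz0 i)]
    refine ⟨S12.Mm σ.symm y, S12.isGeen_Mm σ.symm y hy0 hye hyp, ?_, ?_⟩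
    · rw [hlamk, S12.Mm_mul]
      have hp : σ.trans σ.symm = Equiv.refl (Fin n) := Equiv.self_trans_symm σ
      have hv : (fun i => z i * y (σ i)) = dk := funext hrel
      rw [hp, hv]
      rfl
    · rw [hlen_lam, hlen_w, S12.len_Mm he2 hn σ.symm y hy0 hye hyp]
      apply (S12.key_equiv σ z y dk hz0 hrel hdkne).2
      intro i hND
      have hi0 : (i : ℕ) ≠ 0 := fun hh => hND (S12.ND_zero_row σ hh)
      have hnz : S12.Mm σ z i (σ i) ≠ 0 := (S12.Mm_ne_zero_iff σ z hz0 i (σ i)).2 rfl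
      have hnb : ¬ IsBullet n (S12.Mm σ z) i (σ i) := (S12.bullet_iff σ z hz0 i).2 hND
      have hval_ic : S12.Mm σ z i (σ i) = z i := if_pos rfl
      have hc := hcond i (σ i) hnz hnb
      rw [hval_ic] at hc
      rcases hc with h | h
      · exact Or.inl h
      · right
        rw [h, hdkval i hi0]
end

section
/- For 1 ≤ k ≤ e-1, λ^k is a balanced element of G(e,e,n): the set of left divisors of λ^k (for ≼) coincides with the set of right divisors of λ^k (for ≼_r). -/
open Matrix Complex
open scoped Classical

namespace S13
variable {e n : ℕ}

lemma zeta_ne_zero (e : ℕ) : zeta e ≠ 0 := Complex.exp_ne_zero _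

lemma zeta_zpow (m : ℤ) : zeta e ^ m = Complex.exp (m * (2 * Real.pi * Complex.I / e)) :=
  (Complex.exp_int_mul _ _).symm

lemma zeta_pow_e (he : e ≠ 0) : zeta e ^ e = 1 := by
  have hc : (e:ℂ) ≠ 0 := Nat.cast_ne_zero.mpr he
  rw [zeta, ← Complex.exp_nat_mul,
    show (e : ℂ) * (2 * Real.pi * Complex.I / e) = 2 * Real.pi * Complex.I by
      field_simp]
  exact Complex.exp_two_pi_mul_I

lemma zeta_zpow_e (he : e ≠ 0) : zeta e ^ (e : ℤ) = 1 := by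
  rw [zpow_natCast]; exact zeta_pow_e he

lemma zeta_zpow_congr (he : e ≠ 0) {a b : ℤ} (h : a % e = b % e) :
    zeta e ^ a = zeta e ^ b := by
  obtain ⟨q, hq⟩ := (Int.ModEq.dvd (show a ≡ b [ZMOD (e:ℤ)] from h))
  have hb : b = a + e * q := by linarith
  rw [hb, zpow_add₀ (zeta_ne_zero e), _root_.zpow_mul, zeta_zpow_e he, _root_.one_zpow,
    mul_one]

lemma tmat_congr (he : e ≠ 0) {a b : ℤ} (h : a % e = b % e) :
    tmat e n a = tmat e n b := by
  unfold tmat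
  rw [zeta_zpow_congr he h, zeta_zpow_congr he (Int.ModEq.neg h)]

lemma lam_mul_tmat (i : ℤ) :
    lam e n * tmat e n i = tmat e n (i + n) * lam e n := by
  ext a b
  simp only [lam]
  rw [Matrix.diagonal_mul, Matrix.mul_diagonal]
  simp only [tmat, Matrix.of_apply]
  have hz := zeta_ne_zero e
  split_ifs <;>
    first
      | omega
      | (try simp only [mul_zero, zero_mul, mul_one, one_mul]
         try simp only [zeta_zpow]
         try simp only [zeta]
         try simp only [← Complex.exp_add]
         try (first
           | rfl
           | (refine congrArg Complex.exp ?_; push_cast; ring)))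

lemma lam_mul_smat {j : ℕ} (hj : 3 ≤ j) :
    lam e n * smat n j = smat n j * lam e n := by
  ext a b
  simp only [lam]
  rw [Matrix.diagonal_mul, Matrix.mul_diagonal]
  simp only [smat, Matrix.of_apply]
  split_ifs <;>
    first
      | omega
      | simp only [mul_zero, zero_mul, mul_one, one_mul]

lemma conj_gen (he : e ≠ 0) (x : Matrix (Fin n) (Fin n) ℂ) (hx : x ∈ Xset e n) :
    ∃ x' ∈ Xset e n, lam e n * x = x' * lam e n := by
  rcases hx with ⟨i, hi, rfl⟩ | ⟨j, hj3, hjn, rfl⟩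
  · refine ⟨tmat e n ((i + n) % e), Or.inl ⟨(i + n) % e, Nat.mod_lt _ (Nat.pos_of_ne_zero he), rfl⟩, ?_⟩
    rw [lam_mul_tmat]
    congr 1
    apply tmat_congr he
    push_cast
    rw [Int.emod_emod_of_dvd _ dvd_rfl]
  · exact ⟨smat n j, Or.inr ⟨j, hj3, hjn, rfl⟩, lam_mul_smat hj3⟩

lemma gen_conj (he : e ≠ 0) (x : Matrix (Fin n) (Fin n) ℂ) (hx : x ∈ Xset e n) :
    ∃ x' ∈ Xset e n, x * lam e n = lam e n * x' := by
  rcases hx with ⟨i, hi, rfl⟩ | ⟨j, hj3, hjn, rfl⟩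
  · have heZ : (e:ℤ) ≠ 0 := Int.natCast_ne_zero.mpr he
    have hlt : ((i - n : ℤ) % e).toNat < e := by
      have h0 : (0:ℤ) < (e:ℤ) := by exact_mod_cast Nat.pos_of_ne_zero he
      have := Int.emod_lt_of_pos (i - n : ℤ) h0
      have := Int.emod_nonneg (i - n : ℤ) heZ
      omega
    refine ⟨tmat e n (((i - n : ℤ) % e).toNat), Or.inl ⟨((i - n : ℤ) % e).toNat, hlt, rfl⟩, ?_⟩
    have h1 : lam e n * tmat e n ((i:ℤ) - n) = tmat e n i * lam e n := by
      rw [lam_mul_tmat]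
      congr 1
      apply tmat_congr he
      rw [Int.sub_add_cancel]
    rw [← h1]
    congr 1
    apply tmat_congr he
    have h0 : (0:ℤ) ≤ ((i - n : ℤ) % e) := Int.emod_nonneg _ heZ
    rw [Int.toNat_of_nonneg h0, Int.emod_emod_of_dvd _ dvd_rfl]
  · exact ⟨smat n j, Or.inr ⟨j, hj3, hjn, rfl⟩, (lam_mul_smat hj3).symm⟩


lemma conj_word (he : e ≠ 0) :
    ∀ l : List (Matrix (Fin n) (Fin n) ℂ), (∀ x ∈ l, x ∈ Xset e n) →
    ∃ l' : List (Matrix (Fin n) (Fin n) ℂ), (∀ x ∈ l', x ∈ Xset e n) ∧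
      l'.length = l.length ∧ lam e n * l.prod = l'.prod * lam e n := by
  intro l
  induction l with
  | nil => exact fun _ => ⟨[], by simp, by simp, by simp⟩
  | cons x l ih =>
    intro hl
    obtain ⟨x', hx', hcomm⟩ := conj_gen he x (hl x (by simp))
    obtain ⟨l', hl', hlen, hprod⟩ := ih (fun y hy => hl y (by simp [hy]))
    refine ⟨x' :: l', ?_, by simp [hlen], ?_⟩
    · intro y hy
      rcases List.mem_cons.mp hy with rfl | hy
      · exact hx'
      · exact hl' y hy
    · simp only [List.prod_cons]
      rw [← mul_assoc, hcomm, mul_assoc, hprod, ← mul_assoc]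

lemma word_conj (he : e ≠ 0) :
    ∀ l : List (Matrix (Fin n) (Fin n) ℂ), (∀ x ∈ l, x ∈ Xset e n) →
    ∃ l' : List (Matrix (Fin n) (Fin n) ℂ), (∀ x ∈ l', x ∈ Xset e n) ∧
      l'.length = l.length ∧ l.prod * lam e n = lam e n * l'.prod := by
  intro l
  induction l with
  | nil => exact fun _ => ⟨[], by simp, by simp, by simp⟩
  | cons x l ih =>
    intro hl
    obtain ⟨x', hx', hcomm⟩ := gen_conj he x (hl x (by simp))
    obtain ⟨l', hl', hlen, hprod⟩ := ih (fun y hy => hl y (by simp [hy]))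
    refine ⟨x' :: l', ?_, by simp [hlen], ?_⟩
    · intro y hy
      rcases List.mem_cons.mp hy with rfl | hy
      · exact hx'
      · exact hl' y hy
    · simp only [List.prod_cons]
      rw [mul_assoc, hprod, ← mul_assoc, hcomm, mul_assoc]

lemma zeta_zpow_pow_e (he : e ≠ 0) (m : ℤ) : (zeta e ^ m) ^ e = 1 := by
  rw [← zpow_natCast (zeta e ^ m) e, ← _root_.zpow_mul, mul_comm, _root_.zpow_mul,
    zeta_zpow_e he, _root_.one_zpow]

lemma lam_pow_e (he : e ≠ 0) : lam e n ^ e = 1 := by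
  rw [lam, Matrix.diagonal_pow]
  have h1 : ((fun i : Fin n => if (i : ℕ) = 0 then zeta e ^ (-(n - 1 : ℤ)) else zeta e) ^ e)
      = (1 : Fin n → ℂ) := ?_
  · rw [h1]; exact Matrix.diagonal_one
  funext i
  simp only [Pi.pow_apply, Pi.one_apply]
  split_ifs
  · exact zeta_zpow_pow_e he _
  · exact zeta_pow_e he

lemma lam_inv_mul (he : e ≠ 0) : lam e n ^ (e-1) * lam e n = 1 := by
  rw [← pow_succ, show e - 1 + 1 = e by omega, lam_pow_e he]

lemma lam_mul_inv (he : e ≠ 0) : lam e n * lam e n ^ (e-1) = 1 := by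
  rw [← pow_succ', show e - 1 + 1 = e by omega, lam_pow_e he]

lemma len_eq_of (he : e ≠ 0) {v v' : Matrix (Fin n) (Fin n) ℂ}
    (h : lam e n * v = v' * lam e n) : len e n v' = len e n v := by
  unfold len
  congr 1
  ext r
  simp only [Set.mem_setOf_eq]
  constructor
  · rintro ⟨l, hl, hlen, rfl⟩
    obtain ⟨l'', hl'', hlen'', hp⟩ := word_conj he l hl
    refine ⟨l'', hl'', hlen''.trans hlen, ?_⟩
    have h2 : lam e n * v = lam e n * l''.prod := h.trans hp
    calc l''.prod = (lam e n ^ (e-1) * lam e n) * l''.prod := by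
          rw [lam_inv_mul he, one_mul]
      _ = lam e n ^ (e-1) * (lam e n * v) := by rw [mul_assoc, ← h2]
      _ = v := by rw [← mul_assoc, lam_inv_mul he, one_mul]
  · rintro ⟨l, hl, hlen, rfl⟩
    obtain ⟨l'', hl'', hlen'', hp⟩ := conj_word he l hl
    refine ⟨l'', hl'', hlen''.trans hlen, ?_⟩
    have h2 : v' * lam e n = l''.prod * lam e n := h.symm.trans hp
    calc l''.prod = l''.prod * (lam e n * lam e n ^ (e-1)) := by
          rw [lam_mul_inv he, mul_one]
      _ = (v' * lam e n) * lam e n ^ (e-1) := by rw [← mul_assoc, ← h2]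
      _ = v' := by rw [mul_assoc, lam_mul_inv he, mul_one]

lemma len_conj_pow (he : e ≠ 0) (k : ℕ) (u : Matrix (Fin n) (Fin n) ℂ) :
    len e n (lam e n ^ k * u * (lam e n ^ (e-1)) ^ k) = len e n u := by
  induction k with
  | zero => simp
  | succ k ih =>
    have hstep : ∀ v : Matrix (Fin n) (Fin n) ℂ,
        len e n (lam e n * v * lam e n ^ (e-1)) = len e n v := by
      intro v
      apply len_eq_of he
      rw [mul_assoc (lam e n * v), lam_inv_mul he, mul_one]
    have hre : lam e n ^ (k+1) * u * (lam e n ^ (e-1)) ^ (k+1)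
        = lam e n * (lam e n ^ k * u * (lam e n ^ (e-1)) ^ k) * lam e n ^ (e-1) := by
      rw [pow_succ', pow_succ]
      simp only [mul_assoc]
    rw [hre, hstep, ih]

lemma prod_nonzero {w : Matrix (Fin n) (Fin n) ℂ} (σ : Fin n → Fin n)
    (hσ : ∀ i, w i (σ i) ≠ 0) (hu : ∀ i j, w i j ≠ 0 → j = σ i) :
    (∏ i, ∏ j, (if w i j ≠ 0 then w i j else 1)) = ∏ i, w i (σ i) := by
  refine Finset.prod_congr rfl fun i _ => ?_
  rw [Finset.prod_eq_single (σ i)]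
  · simp [hσ i]
  · intro j _ hj
    simp only [ite_eq_right_iff]
    intro hwj
    exact absurd (hu i j hwj) hj
  · simp

lemma IsGeen_mul {A B : Matrix (Fin n) (Fin n) ℂ}
    (hA : IsGeen e n A) (hB : IsGeen e n B) : IsGeen e n (A * B) := by
  obtain ⟨hA1, hA2, hA3, hA4⟩ := hA
  obtain ⟨hB1, hB2, hB3, hB4⟩ := hB
  choose σ hσ hσu using hA1
  choose τ hτ hτu using hB1
  have key : ∀ i k, (A * B) i k = A i (σ i) * B (σ i) k := by
    intro i k
    rw [Matrix.mul_apply, Finset.sum_eq_single (σ i)]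
    · intro j _ hj
      have : A i j = 0 := by
        by_contra hne
        exact hj (hσu i j hne)
      rw [this, zero_mul]
    · intro h
      exact absurd (Finset.mem_univ _) h
  have hnz : ∀ i k, (A * B) i k ≠ 0 ↔ B (σ i) k ≠ 0 := by
    intro i k
    rw [key]
    constructor
    · intro h hB0
      exact h (by rw [hB0, mul_zero])
    · intro h
      exact mul_ne_zero (hσ i) h
  have hinj : Function.Injective σ := by
    intro i i' hii
    obtain ⟨r, hr, hru⟩ := hA2 (σ i)
    rw [hru i (hσ i), hru i' (by rw [hii]; exact hσ i')]
  have hbij : Function.Bijective σ := ⟨hinj, Finite.surjective_of_injective hinj⟩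
  refine ⟨?_, ?_, ?_, ?_⟩
  · intro i
    refine ⟨τ (σ i), (hnz i _).mpr (hτ (σ i)), fun k hk => hτu (σ i) k ((hnz i k).mp hk)⟩
  · intro kcol
    obtain ⟨r, hr, hru⟩ := hB2 kcol
    obtain ⟨i₀, hi₀⟩ := hbij.2 r
    refine ⟨i₀, (hnz i₀ _).mpr (by rw [hi₀]; exact hr), fun i hi => ?_⟩
    exact hinj (by rw [hi₀]; exact hru (σ i) ((hnz i kcol).mp hi))
  · intro i k h
    rw [key, mul_pow, hA3 i (σ i) (hσ i), hB3 (σ i) k ((hnz i k).mp h), one_mul]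
  · have hABσ : ∀ i, (A * B) i (τ (σ i)) ≠ 0 := fun i => (hnz i _).mpr (hτ (σ i))
    have hABu : ∀ i k, (A * B) i k ≠ 0 → k = τ (σ i) :=
      fun i k hk => hτu (σ i) k ((hnz i k).mp hk)
    rw [prod_nonzero (fun i => τ (σ i)) hABσ hABu]
    have : ∀ i, (A * B) i (τ (σ i)) = A i (σ i) * B (σ i) (τ (σ i)) := fun i => key i _
    rw [Finset.prod_congr rfl (fun i _ => this i), Finset.prod_mul_distrib]
    have e1 : (∏ i, A i (σ i)) = 1 := by
      rw [← prod_nonzero σ hσ hσu]; exact hA4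
    have e2 : (∏ i, B (σ i) (τ (σ i))) = 1 := by
      have hcomp := Equiv.prod_comp (Equiv.ofBijective σ hbij) (fun j => B j (τ j))
      simp only [Equiv.ofBijective_apply] at hcomp
      rw [hcomp, ← prod_nonzero τ hτ hτu]
      exact hB4
    rw [e1, e2, one_mul]

lemma IsGeen_diagonal (d : Fin n → ℂ) (hd : ∀ i, d i ≠ 0) (hpow : ∀ i, d i ^ e = 1)
    (hprod : ∏ i, d i = 1) : IsGeen e n (Matrix.diagonal d) := by
  have hne : ∀ i j, Matrix.diagonal d i j ≠ 0 → j = i := by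
    intro i j h
    by_contra hij
    exact h (Matrix.diagonal_apply_ne d (fun hc => hij hc.symm))
  have hdd : ∀ i, Matrix.diagonal d i i ≠ 0 := by
    intro i
    rw [Matrix.diagonal_apply_eq]
    exact hd i
  refine ⟨fun i => ⟨i, hdd i, hne i⟩, ?_, ?_, ?_⟩
  · intro j
    refine ⟨j, hdd j, fun i hi => ?_⟩
    by_contra hij
    exact hi (Matrix.diagonal_apply_ne d hij)
  · intro i j h
    rw [hne i j h, Matrix.diagonal_apply_eq]
    exact hpow i
  · rw [prod_nonzero (fun i => i) hdd hne]
    simpa using hprod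

lemma isGeen_isUnit (he : 2 ≤ e) {w : Matrix (Fin n) (Fin n) ℂ}
    (hw : IsGeen e n w) : IsUnit w := by
  obtain ⟨h1, h2, h3, _⟩ := hw
  choose σ hσ hσu using h1
  have hmul : w * (Matrix.of fun i j => w j i ^ (e-1)) = 1 := by
    ext i k
    rw [Matrix.mul_apply, Matrix.one_apply]
    by_cases hik : i = k
    · subst hik
      rw [if_pos rfl, Finset.sum_eq_single (σ i)]
      · simp only [Matrix.of_apply]
        rw [← pow_succ', show e - 1 + 1 = e by omega]
        exact h3 i (σ i) (hσ i)
      · intro j _ hj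
        have : w i j = 0 := by
          by_contra hne
          exact hj (hσu i j hne)
        rw [this, zero_mul]
      · intro h
        exact absurd (Finset.mem_univ _) h
    · rw [if_neg hik]
      apply Finset.sum_eq_zero
      intro j _
      simp only [Matrix.of_apply]
      by_cases hij : w i j = 0
      · rw [hij, zero_mul]
      · have hkj : w k j = 0 := by
          by_contra hkj
          obtain ⟨r, hr, hru⟩ := h2 j
          exact hik ((hru i hij).trans (hru k hkj).symm)
        rw [hkj, zero_pow (by omega), mul_zero]
    
  have := invertibleOfRightInverse _ _ hmul
  exact isUnit_of_invertible w

lemma IsGeen_lam_pow (he : e ≠ 0) (hn : 1 ≤ n) (m : ℕ) : IsGeen e n (lam e n ^ m) := by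
  rw [lam, Matrix.diagonal_pow]
  set d : Fin n → ℂ := fun i => if (i : ℕ) = 0 then zeta e ^ (-(n - 1 : ℤ)) else zeta e with hd
  have hd0 : ∀ i, d i ≠ 0 := by
    intro i
    rw [hd]
    dsimp only
    split_ifs
    · exact zpow_ne_zero _ (zeta_ne_zero e)
    · exact zeta_ne_zero e
  have hdpow : ∀ i, d i ^ e = 1 := by
    intro i
    rw [hd]
    dsimp only
    split_ifs
    · exact zeta_zpow_pow_e he _
    · exact zeta_pow_e he
  have hdprod : ∏ i, d i = 1 := by
    obtain ⟨p, rfl⟩ : ∃ p, n = p + 1 := ⟨n - 1, by omega⟩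
    rw [Fin.prod_univ_succ]
    have h0 : d 0 = zeta e ^ (-((p+1 : ℕ) - 1 : ℤ)) := by
      rw [hd]
      simp
    have hs : ∀ i : Fin p, d i.succ = zeta e := by
      intro i
      rw [hd]
      simp [Fin.val_succ]
    rw [h0, Finset.prod_congr rfl (fun i _ => hs i), Finset.prod_const, Finset.card_univ,
      Fintype.card_fin, ← zpow_natCast (zeta e) p, ← zpow_add₀ (zeta_ne_zero e)]
    rw [show (-((p+1 : ℕ) - 1 : ℤ) + p) = 0 by push_cast; ring, zpow_zero]
  refine IsGeen_diagonal (d ^ m) (fun i => pow_ne_zero m (hd0 i)) ?_ ?_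
  · intro i
    simp only [Pi.pow_apply]
    rw [← pow_mul, mul_comm, pow_mul, hdpow i, one_pow]
  · simp only [Pi.pow_apply]
    rw [Finset.prod_pow, hdprod, one_pow]

end S13

/-- for `1 ≤ k ≤ e-1`, `λ^k` is balanced: its left divisors coincide
with its right divisors. -/
theorem statement_13 (e n : ℕ) (hn : 2 ≤ n) (k : ℕ) (hk1 : 1 ≤ k) (hke : k ≤ e - 1)
    (w : Matrix (Fin n) (Fin n) ℂ) (hw : IsGeen e n w) :
    ldvd e n w (lam e n ^ k) ↔ rdvd e n w (lam e n ^ k) := by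
  have he : e ≠ 0 := by omega
  have he2 : 2 ≤ e := by omega
  have hup : ∀ m, IsGeen e n (lam e n ^ m) := S13.IsGeen_lam_pow he (by omega)
  have hwu : IsUnit w := S13.isGeen_isUnit he2 hw
  have hdet : IsUnit w.det := (Matrix.isUnit_iff_isUnit_det w).mp hwu
  have hsum : k + (e-1)*k = e*k := by
    have h' : 1 + (e-1) = e := by omega
    calc k + (e-1)*k = (1 + (e-1)) * k := by ring
      _ = e * k := by rw [h']
  have hsum' : (e-1)*k + k = e*k := by omega
  have hone : lam e n ^ k * lam e n ^ ((e-1)*k) = 1 := by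
    rw [← pow_add, hsum, pow_mul, S13.lam_pow_e he, one_pow]
  have hone' : lam e n ^ ((e-1)*k) * lam e n ^ k = 1 := by
    rw [← pow_add, hsum', pow_mul, S13.lam_pow_e he, one_pow]
  constructor
  · rintro ⟨w'', hG, hEq, hLen⟩
    have hw'' : w'' = w⁻¹ * lam e n ^ k := by
      rw [hEq, ← mul_assoc, Matrix.nonsing_inv_mul w hdet, one_mul]
    refine ⟨lam e n ^ k * w'' * lam e n ^ ((e-1)*k),
      S13.IsGeen_mul (S13.IsGeen_mul (hup k) hG) (hup _), ?_, ?_⟩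
    · rw [hw'']
      have hq : lam e n ^ k * (lam e n ^ ((e-1)*k) * w) = w := by
        rw [← mul_assoc, hone, one_mul]
      simp only [mul_assoc]
      rw [hq, Matrix.nonsing_inv_mul w hdet, mul_one]
    · have h3 : len e n (lam e n ^ k * w'' * lam e n ^ ((e-1)*k)) = len e n w'' := by
        have h4 := S13.len_conj_pow he k w''
        rwa [← pow_mul] at h4
      rw [h3, hLen, Nat.add_comm]
  · rintro ⟨w'', hG, hEq, hLen⟩
    have hw'' : w'' = lam e n ^ k * w⁻¹ := by
      rw [hEq, mul_assoc, Matrix.mul_nonsing_inv w hdet, mul_one]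
    refine ⟨lam e n ^ ((e-1)*k) * w'' * lam e n ^ k,
      S13.IsGeen_mul (S13.IsGeen_mul (hup _) hG) (hup k), ?_, ?_⟩
    · rw [hw'']
      have hq : lam e n ^ ((e-1)*k) * (lam e n ^ k * (w⁻¹ * lam e n ^ k))
          = w⁻¹ * lam e n ^ k := by
        rw [← mul_assoc, hone', one_mul]
      simp only [mul_assoc]
      rw [hq, ← mul_assoc, Matrix.mul_nonsing_inv w hdet, one_mul]
    · have h3 : len e n (lam e n ^ ((e-1)*k) * w'' * lam e n ^ k) = len e n w'' := by
        have h4 := S13.len_conj_pow he k (lam e n ^ ((e-1)*k) * w'' * lam e n ^ k)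
        rw [← pow_mul] at h4
        rw [show lam e n ^ k * (lam e n ^ ((e-1)*k) * w'' * lam e n ^ k) * lam e n ^ ((e-1)*k)
            = w'' from ?_] at h4
        · exact h4.symm
        · simp only [mul_assoc]
          rw [hone, mul_one, ← mul_assoc, hone, one_mul]
      rw [h3, hLen, Nat.add_comm]
end

section
/- If w ∈ [1,λ] (i.e., w divides λ for the length order on G(e,e,n)), then both w^{-1}λ and λw^{-1} also lie in [1,λ]. -/
open Matrix Complex
open scoped Classical

lemma zeta_ne_zero (e : ℕ) : zeta e ≠ 0 := Complex.exp_ne_zero _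

lemma zeta_pow_e (e : ℕ) (he : 1 ≤ e) : zeta e ^ (e : ℤ) = 1 := by
  have h : (e : ℂ) ≠ 0 := Nat.cast_ne_zero.2 (by omega)
  rw [zeta, ← Complex.exp_int_mul]
  have : (e : ℤ) * (2 * (Real.pi : ℂ) * Complex.I / e) = 2 * Real.pi * Complex.I := by
    push_cast; field_simp
  rw [this, Complex.exp_two_pi_mul_I]

lemma zeta_zpow_congr (e : ℕ) (he : 1 ≤ e) {a b : ℤ} (h : a % (e : ℤ) = b % (e : ℤ)) :
    zeta e ^ a = zeta e ^ b := by
  have hd : (e : ℤ) ∣ b - a := Int.ModEq.dvd h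
  obtain ⟨k, hk⟩ := hd
  have hb : b = a + (e : ℤ) * k := by omega
  rw [hb, zpow_add₀ (zeta_ne_zero e), _root_.zpow_mul, zeta_pow_e e he, _root_.one_zpow, mul_one]

lemma tmat_congr (e n : ℕ) (he : 1 ≤ e) {a b : ℤ} (h : a % (e : ℤ) = b % (e : ℤ)) :
    tmat e n a = tmat e n b := by
  have k1 : zeta e ^ a = zeta e ^ b := zeta_zpow_congr e he h
  have k2 : zeta e ^ (-a) = zeta e ^ (-b) := by rw [_root_.zpow_neg, _root_.zpow_neg, k1]
  simp only [tmat, k1, k2]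

def eps (n : ℕ) (a : Fin n) : ℤ := if (a : ℕ) = 0 then -((n : ℤ) - 1) else 1

noncomputable def Lam (e n : ℕ) (k : ℤ) : Matrix (Fin n) (Fin n) ℂ :=
  Matrix.diagonal (fun a => zeta e ^ (k * eps n a))

lemma lam_eq (e n : ℕ) : lam e n = Lam e n 1 := by
  ext a b
  rw [lam, Lam]
  rcases eq_or_ne a b with h | h
  · subst h
    simp only [Matrix.diagonal_apply_eq, eps, one_mul]
    split <;> simp
  · rw [Matrix.diagonal_apply_ne _ h, Matrix.diagonal_apply_ne _ h]

lemma Lam_mul (e n : ℕ) (k : ℤ) : Lam e n k * Lam e n (-k) = 1 := by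
  rw [Lam, Lam, Matrix.diagonal_mul_diagonal]
  have : ∀ a : Fin n, zeta e ^ (k * eps n a) * zeta e ^ (-k * eps n a) = 1 := by
    intro a
    rw [← zpow_add₀ (zeta_ne_zero e)]
    simp
  simp only [this]
  exact Matrix.diagonal_one

lemma zpow_mul3 (e : ℕ) (p q r : ℤ) :
    zeta e ^ p * zeta e ^ q * zeta e ^ r = zeta e ^ (p + q + r) := by
  rw [← zpow_add₀ (zeta_ne_zero e), ← zpow_add₀ (zeta_ne_zero e)]

lemma Lam_conj_tmat (e n : ℕ) (k i : ℤ) :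
    Lam e n k * tmat e n i * Lam e n (-k) = tmat e n (i + k * n) := by
  ext a b
  simp only [Lam, tmat, Matrix.mul_diagonal, Matrix.diagonal_mul, Matrix.of_apply]
  split_ifs with h1 h2 h3
  · have ea : eps n a = -((n : ℤ) - 1) := by simp [eps, h1.1]
    have eb : eps n b = 1 := by simp [eps, h1.2]
    rw [ea, eb, zpow_mul3]
    congr 1; ring
  · have ea : eps n a = 1 := by simp [eps, h2.1]
    have eb : eps n b = -((n : ℤ) - 1) := by simp [eps, h2.2]
    rw [ea, eb, zpow_mul3]
    congr 1; ring
  · rw [mul_one, ← h3.1, ← zpow_add₀ (zeta_ne_zero e)]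
    simp
  · ring

lemma Lam_conj_smat (e n : ℕ) (k : ℤ) (j : ℕ) (hj : 3 ≤ j) :
    Lam e n k * smat n j * Lam e n (-k) = smat n j := by
  ext a b
  simp only [Lam, smat, Matrix.mul_diagonal, Matrix.diagonal_mul, Matrix.of_apply]
  split_ifs with h1 h2 h3
  · have ea : eps n a = 1 := by simp [eps, h1.1]; omega
    have eb : eps n b = 1 := by simp [eps, h1.2]; omega
    rw [ea, eb, mul_one, ← zpow_add₀ (zeta_ne_zero e)]
    simp
  · have ea : eps n a = 1 := by simp [eps, h2.1]; omega
    have eb : eps n b = 1 := by simp [eps, h2.2]; omega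
    rw [ea, eb, mul_one, ← zpow_add₀ (zeta_ne_zero e)]
    simp
  · rw [mul_one, ← h3.1, ← zpow_add₀ (zeta_ne_zero e)]
    simp
  · ring

noncomputable def conj (e n : ℕ) (k : ℤ) (x : Matrix (Fin n) (Fin n) ℂ) :
    Matrix (Fin n) (Fin n) ℂ := Lam e n k * x * Lam e n (-k)

lemma Lam_mul' (e n : ℕ) (k : ℤ) : Lam e n (-k) * Lam e n k = 1 := by
  have := Lam_mul e n (-k)
  rwa [neg_neg] at this

lemma conj_mul2 (e n : ℕ) (k : ℤ) (x y : Matrix (Fin n) (Fin n) ℂ) :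
    conj e n k (x * y) = conj e n k x * conj e n k y := by
  simp only [conj, Matrix.mul_assoc]
  rw [← Matrix.mul_assoc (Lam e n (-k)) (Lam e n k), Lam_mul', Matrix.one_mul]

lemma conj_one (e n : ℕ) (k : ℤ) : conj e n k 1 = 1 := by
  simp only [conj, Matrix.mul_one]
  exact Lam_mul e n k

lemma conj_conj (e n : ℕ) (k : ℤ) (x : Matrix (Fin n) (Fin n) ℂ) :
    conj e n (-k) (conj e n k x) = x := by
  simp only [conj, neg_neg]
  rw [← Matrix.mul_assoc, ← Matrix.mul_assoc, Lam_mul' e n k, Matrix.one_mul,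
    Matrix.mul_assoc, Lam_mul' e n k, Matrix.mul_one]

lemma conj_prod (e n : ℕ) (k : ℤ) (l : List (Matrix (Fin n) (Fin n) ℂ)) :
    conj e n k l.prod = (l.map (conj e n k)).prod := by
  induction l with
  | nil => simpa using conj_one e n k
  | cons x xs ih => rw [List.prod_cons, List.map_cons, List.prod_cons, conj_mul2, ih]

lemma conj_mem_X (e n : ℕ) (he : 1 ≤ e) (k : ℤ) {x : Matrix (Fin n) (Fin n) ℂ}
    (hx : x ∈ Xset e n) : conj e n k x ∈ Xset e n := by
  rcases hx with ⟨i, hi, rfl⟩ | ⟨j, hj3, hjn, rfl⟩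
  · left
    refine ⟨((i + k * n) % (e : ℤ)).toNat, ?_, ?_⟩
    · have h0 : (0 : ℤ) < (e : ℤ) := by exact_mod_cast he
      have := Int.emod_lt_of_pos ((i : ℤ) + k * n) h0
      have := Int.emod_nonneg ((i : ℤ) + k * n) (by omega : (e : ℤ) ≠ 0)
      omega
    · rw [conj, Lam_conj_tmat]
      apply tmat_congr e n he
      have h0 : (0 : ℤ) ≤ ((i : ℤ) + k * n) % (e : ℤ) :=
        Int.emod_nonneg _ (by exact_mod_cast (by omega : e ≠ 0))
      rw [Int.toNat_of_nonneg h0, Int.emod_emod_of_dvd _ dvd_rfl]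
  · right
    refine ⟨j, hj3, hjn, ?_⟩
    rw [conj, Lam_conj_smat e n k j hj3]

lemma len_conj (e n : ℕ) (he : 1 ≤ e) (k : ℤ) (x : Matrix (Fin n) (Fin n) ℂ) :
    len e n (conj e n k x) = len e n x := by
  have key : ∀ (k : ℤ) (x : Matrix (Fin n) (Fin n) ℂ) (r : ℕ),
      (∃ l : List (Matrix (Fin n) (Fin n) ℂ),
        (∀ y ∈ l, y ∈ Xset e n) ∧ l.length = r ∧ l.prod = x) →
      (∃ l : List (Matrix (Fin n) (Fin n) ℂ),
        (∀ y ∈ l, y ∈ Xset e n) ∧ l.length = r ∧ l.prod = conj e n k x) := by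
    rintro k x r ⟨l, hl, hlen, hprod⟩
    refine ⟨l.map (conj e n k), ?_, by simp [hlen], by rw [← conj_prod, hprod]⟩
    intro y hy
    obtain ⟨z, hz, rfl⟩ := List.mem_map.mp hy
    exact conj_mem_X e n he k (hl z hz)
  unfold len
  congr 1
  ext r
  constructor
  · intro h
    have := key (-k) _ r h
    rwa [conj_conj] at this
  · exact key k x r

lemma conj_apply (e n : ℕ) (k : ℤ) (w : Matrix (Fin n) (Fin n) ℂ) (a b : Fin n) :
    conj e n k w a b = zeta e ^ (k * eps n a) * w a b * zeta e ^ (-k * eps n b) := by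
  simp [conj, Lam, Matrix.mul_diagonal, Matrix.diagonal_mul]

lemma conj_ne_zero (e n : ℕ) (k : ℤ) (w : Matrix (Fin n) (Fin n) ℂ) (a b : Fin n) :
    conj e n k w a b ≠ 0 ↔ w a b ≠ 0 := by
  rw [conj_apply]
  constructor
  · intro h h0; exact h (by rw [h0]; ring)
  · intro h
    exact mul_ne_zero (mul_ne_zero (zpow_ne_zero _ (zeta_ne_zero e)) h)
      (zpow_ne_zero _ (zeta_ne_zero e))

lemma zeta_zpow_pow_e (e : ℕ) (he : 1 ≤ e) (m : ℤ) : (zeta e ^ m) ^ e = 1 := by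
  rw [← zpow_natCast (zeta e ^ m) e, ← _root_.zpow_mul, mul_comm, _root_.zpow_mul,
    zeta_pow_e e he, _root_.one_zpow]

lemma isGeen_conj (e n : ℕ) (he : 1 ≤ e) (k : ℤ) {w : Matrix (Fin n) (Fin n) ℂ}
    (hw : IsGeen e n w) : IsGeen e n (conj e n k w) := by
  obtain ⟨h1, h2, h3, h4⟩ := hw
  refine ⟨?_, ?_, ?_, ?_⟩
  · intro i
    obtain ⟨j, hj, hju⟩ := h1 i
    exact ⟨j, (conj_ne_zero e n k w i j).mpr hj,
      fun y hy => hju y ((conj_ne_zero e n k w i y).mp hy)⟩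
  · intro j
    obtain ⟨i, hi, hiu⟩ := h2 j
    exact ⟨i, (conj_ne_zero e n k w i j).mpr hi,
      fun y hy => hiu y ((conj_ne_zero e n k w y j).mp hy)⟩
  · intro i j hne
    rw [conj_apply, mul_pow, mul_pow, h3 i j ((conj_ne_zero e n k w i j).mp hne),
      zeta_zpow_pow_e e he, zeta_zpow_pow_e e he]
    ring
  · -- product of nonzero entries
    choose σ hσ hσu using h1
    have hinner : ∀ (M : Matrix (Fin n) (Fin n) ℂ), (∀ i j, (M i j ≠ 0 ↔ w i j ≠ 0)) →
        ∀ i, (∏ j, if M i j ≠ 0 then M i j else 1) = M i (σ i) := by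
      intro M hM i
      rw [Finset.prod_eq_single (σ i)
        (fun b _ hb => if_neg (fun hb' => hb (hσu i b ((hM i b).mp hb'))))
        (fun h => absurd (Finset.mem_univ _) h)]
      exact if_pos ((hM i (σ i)).mpr (hσ i))
    have hw4 : (∏ i, w i (σ i)) = 1 := by
      rw [← h4]
      exact (Finset.prod_congr rfl fun i _ => (hinner w (fun _ _ => Iff.rfl) i)).symm
    have hbij : Function.Bijective σ := by
      rw [Fintype.bijective_iff_injective_and_card]
      refine ⟨fun i1 i2 hi => ?_, rfl⟩
      obtain ⟨c, hc, hcu⟩ := h2 (σ i2)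
      rw [hcu i1 (by rw [← hi]; exact hσ i1), hcu i2 (hσ i2)]
    calc (∏ i, ∏ j, if conj e n k w i j ≠ 0 then conj e n k w i j else 1)
        = ∏ i, conj e n k w i (σ i) :=
          Finset.prod_congr rfl fun i _ => hinner _ (fun a b => conj_ne_zero e n k w a b) i
      _ = ∏ i, zeta e ^ (k * eps n i) * w i (σ i) * zeta e ^ (-k * eps n (σ i)) :=
          Finset.prod_congr rfl fun i _ => conj_apply e n k w i (σ i)
      _ = (∏ i, zeta e ^ (k * eps n i) * w i (σ i)) * ∏ i, zeta e ^ (-k * eps n (σ i)) :=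
          Finset.prod_mul_distrib
      _ = ((∏ i, zeta e ^ (k * eps n i)) * ∏ i, w i (σ i)) * ∏ i, zeta e ^ (-k * eps n (σ i)) := by
          rw [Finset.prod_mul_distrib]
      _ = ((∏ i, zeta e ^ (k * eps n i)) * 1) * ∏ i, zeta e ^ (-k * eps n i) := by
          rw [hw4, Function.Bijective.prod_comp hbij (fun i => zeta e ^ (-k * eps n i))]
      _ = ∏ i, zeta e ^ (k * eps n i) * zeta e ^ (-k * eps n i) := by
          rw [mul_one, ← Finset.prod_mul_distrib]
      _ = 1 := by
          apply Finset.prod_eq_one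
          intro i _
          rw [← zpow_add₀ (zeta_ne_zero e)]
          simp

/-- if `w ∈ [1,λ]` then `w⁻¹λ ∈ [1,λ]` and `λw⁻¹ ∈ [1,λ]`. -/
theorem statement_14 (e n : ℕ) (he : 1 ≤ e) (hn : 2 ≤ n)
    (w : Matrix (Fin n) (Fin n) ℂ) (hw : IsGeen e n w)
    (hdvd : ldvd e n w (lam e n)) :
    ldvd e n (w⁻¹ * lam e n) (lam e n) ∧ ldvd e n (lam e n * w⁻¹) (lam e n) := by
  obtain ⟨w'', hG'', heq, hlen⟩ := hdvd
  have hlamΛ : lam e n = Lam e n 1 := lam_eq e n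
  have h1 : Lam e n 1 * Lam e n (-1) = 1 := Lam_mul e n 1
  have h2 : Lam e n (-1) * Lam e n 1 = 1 := Lam_mul' e n 1
  have hinv : w⁻¹ = w'' * Lam e n (-1) := Matrix.inv_eq_right_inv (by
    rw [← Matrix.mul_assoc, ← heq, hlamΛ, h1])
  have hkey : w'' * Lam e n (-1) * w = 1 := by
    have ha : Lam e n (-1) * w * w'' = 1 := by
      rw [Matrix.mul_assoc, ← heq, hlamΛ, h2]
    have hb := mul_eq_one_comm.mp ha
    rwa [← Matrix.mul_assoc] at hb
  constructor
  · have hwinvlam : w⁻¹ * lam e n = w'' := by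
      rw [hinv, hlamΛ, Matrix.mul_assoc, h2, Matrix.mul_one]
    refine ⟨conj e n (-1) w, isGeen_conj e n he (-1) hw, ?_, ?_⟩
    · rw [hwinvlam, conj, neg_neg, ← Matrix.mul_assoc, ← Matrix.mul_assoc, hkey,
        Matrix.one_mul, hlamΛ]
    · rw [hwinvlam, len_conj e n he (-1) w, hlen, Nat.add_comm]
  · have hlamwinv : lam e n * w⁻¹ = conj e n 1 w'' := by
      rw [hinv, conj, hlamΛ, ← Matrix.mul_assoc]
    refine ⟨w, hw, ?_, ?_⟩
    · rw [hlamwinv, conj, Matrix.mul_assoc, Matrix.mul_assoc,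
        ← Matrix.mul_assoc w'', hkey, Matrix.mul_one, hlamΛ]
    · rw [hlamwinv, len_conj e n he 1 w'', hlen, Nat.add_comm]
end
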